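/- arXiv:1803.06499 — 9 statements merged into one kernel-verified Lean document; each statement's English description precedes it below -/
import Mathlib

section
/- For every λ = (λ_1, …, λ_n) ∈ ℂ^n, the determinant of the Jacobian matrix (∂π_{n,k}/∂λ_j)_{1≤k,j≤n} of the symmetrization map π_n at λ equals ∏_{1≤i<j≤n}(λ_i − λ_j). -/
open Finset Matrix

/-- Vieta-type formula: the product `∏ i ∈ s, (x - f i)` expanded in terms of the
elementary symmetric functions of the `f i`. -/
lemma prod_sub_eq_sum_esymm {R : Type*} [CommRing R] {ι : Type*} [DecidableEq ι]
    (s : Finset ι) (f : ι → R) (x : R) :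
    ∏ i ∈ s, (x - f i) = ∑ k ∈ Finset.range (s.card + 1),
      (-1) ^ k * (∑ t ∈ s.powersetCard k, ∏ i ∈ t, f i) * x ^ (s.card - k) := by
  have h := congrArg (Polynomial.eval x) (Multiset.prod_X_sub_X_eq_sum_esymm (s.val.map f))
  simp only [Polynomial.eval_multiset_prod, Multiset.map_map, Function.comp,
    Polynomial.eval_sub, Polynomial.eval_X, Polynomial.eval_C, Polynomial.eval_finset_sum,
    Polynomial.eval_mul, Polynomial.eval_pow, Polynomial.eval_neg, Polynomial.eval_one,
    Multiset.card_map, Finset.esymm_map_val] at h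
  rw [Finset.prod_eq_multiset_prod, h]
  exact Finset.sum_congr rfl fun k _ => by rw [mul_assoc]; rfl

/-- The sign of the order-reversing permutation of `Fin n`. -/
lemma sign_revPerm_fin : ∀ n : ℕ, Equiv.Perm.sign (Fin.revPerm : Equiv.Perm (Fin n))
    = (-1) ^ (∑ i ∈ Finset.range n, i) := by
  intro n
  induction n with
  | zero => simp [Subsingleton.elim (Fin.revPerm : Equiv.Perm (Fin 0)) 1]
  | succ n ih =>
    have key : (finRotate (n+1)) * (Fin.revPerm : Equiv.Perm (Fin (n+1))) =
        Equiv.Perm.decomposeFin.symm (0, (Fin.revPerm : Equiv.Perm (Fin n))) := by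
      ext i
      refine Fin.cases ?_ (fun x => ?_) i
      · simp [Fin.rev_zero, Fin.last_add_one]
      · simp only [Equiv.Perm.mul_apply, Fin.revPerm_apply, Fin.rev_succ,
          Equiv.Perm.decomposeFin_symm_apply_succ, Equiv.swap_self, Equiv.refl_apply,
          finRotate_succ_apply, Fin.coeSucc_eq_succ]
    have hs := congrArg Equiv.Perm.sign key
    simp only [_root_.map_mul, sign_finRotate, Equiv.Perm.decomposeFin.symm_sign, if_pos rfl,
      one_mul, if_true, ih] at hs
    have h2 : Equiv.Perm.sign (Fin.revPerm : Equiv.Perm (Fin (n+1)))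
        = (-1) ^ n * (-1) ^ (∑ i ∈ Finset.range n, i) := by
      rw [← hs, ← mul_assoc, ← pow_add, Nat.add_sub_cancel, ← two_mul, pow_mul]
      simp
    rw [h2, Finset.sum_range_succ, pow_add, mul_comm]

/-- The determinant of the matrix whose `(k, j)` entry is the `k`-th elementary symmetric
function of the `v i` for `i ≠ j`. -/
lemma det_esymm_matrix {R : Type*} [CommRing R] [IsDomain R] {n : ℕ} (v : Fin n → R)
    (hv : Function.Injective v) :
    Matrix.det (Matrix.of fun k j : Fin n =>
        ∑ t ∈ (Finset.univ.erase j).powersetCard k.1, ∏ i ∈ t, v i)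
      = ∏ i : Fin n, ∏ j ∈ Finset.Ioi i, (v i - v j) := by
  set A : Matrix (Fin n) (Fin n) R :=
    Matrix.of fun k j : Fin n => ∑ t ∈ (Finset.univ.erase j).powersetCard k.1, ∏ i ∈ t, v i
    with hA
  set V : Matrix (Fin n) (Fin n) R :=
    Matrix.of fun m k : Fin n => (-1) ^ k.1 * v m ^ (n - 1 - k.1) with hV
  set P : R := ∏ i : Fin n, ∏ j ∈ Finset.Ioi i, (v j - v i) with hP
  set T : R := ∏ i : Fin n, ∏ j ∈ Finset.Ioi i, (v i - v j) with hT
  have hcard : ∀ j : Fin n, (Finset.univ.erase j).card = n - 1 := fun j => by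
    rw [Finset.card_erase_of_mem (Finset.mem_univ j), Finset.card_univ, Fintype.card_fin]
  -- Step a : `V * A` is diagonal
  have hmul : V * A = Matrix.diagonal fun j => ∏ i ∈ Finset.univ.erase j, (v j - v i) := by
    ext m j
    have hn : n - 1 + 1 = n :=
      Nat.succ_pred_eq_of_pos (Nat.pos_of_ne_zero (by rintro rfl; exact j.elim0))
    have hentry : (V * A) m j = ∏ i ∈ Finset.univ.erase j, (v m - v i) := by
      rw [Matrix.mul_apply, prod_sub_eq_sum_esymm (Finset.univ.erase j) v (v m), hcard j, hn,
        Finset.sum_range fun k => (-1) ^ k *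
          (∑ t ∈ (Finset.univ.erase j).powersetCard k, ∏ i ∈ t, v i) * v m ^ (n - 1 - k)]
      exact Finset.sum_congr rfl fun k _ => by
        simp only [hV, hA, Matrix.of_apply]; ring
    rw [hentry]
    rcases eq_or_ne m j with rfl | hne
    · simp [Matrix.diagonal]
    · rw [Matrix.diagonal_apply_ne _ hne]
      exact Finset.prod_eq_zero (Finset.mem_erase.2 ⟨hne, Finset.mem_univ m⟩) (sub_self _)
  -- Step b : `det V = P`
  have hdetV : V.det = P := by
    have h1 : V = Matrix.of fun m k : Fin n =>
        ((-1 : R) ^ k.1) * ((Matrix.vandermonde v).submatrix id Fin.rev) m k := by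
      ext m k
      simp only [hV, Matrix.of_apply, Matrix.submatrix_apply, Matrix.vandermonde_apply, id,
        Fin.val_rev]
      congr 2
      omega
    rw [h1, Matrix.det_mul_row]
    have h2 : ((Matrix.vandermonde v).submatrix id Fin.rev).det
        = Equiv.Perm.sign (Fin.revPerm : Equiv.Perm (Fin n)) * (Matrix.vandermonde v).det := by
      exact Matrix.det_permute' Fin.revPerm _
    rw [h2, Matrix.det_vandermonde, sign_revPerm_fin n]
    have h3 : (∏ k : Fin n, (-1 : R) ^ k.1) = (-1) ^ (∑ i ∈ Finset.range n, i) := by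
      rw [Finset.prod_pow_eq_pow_sum, Fin.sum_univ_eq_sum_range (fun i => i) n]
    rw [h3, hP]
    push_cast
    rw [← mul_assoc, ← pow_add, ← two_mul, pow_mul]
    simp
  -- Step c : the determinant of the diagonal matrix is `T * P`
  have hdetD : (Matrix.diagonal fun j => ∏ i ∈ Finset.univ.erase j, (v j - v i)).det
      = T * P := by
    rw [Matrix.det_diagonal]
    have := Finset.prod_prod_Ioi_mul_eq_prod_prod_off_diag (fun a b : Fin n => v b - v a)
    simp only [Finset.prod_mul_distrib] at this
    rw [hT, hP, this]
    refine Finset.prod_congr rfl fun j _ => Finset.prod_congr ?_ fun i _ => rfl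
    ext i
    simp [eq_comm]
  have hPne : P ≠ 0 := by
    rw [hP]
    refine Finset.prod_ne_zero_iff.2 fun i _ => Finset.prod_ne_zero_iff.2 fun j hj => ?_
    exact sub_ne_zero.2 (hv.ne (ne_of_gt (Finset.mem_Ioi.1 hj)))
  have := congrArg Matrix.det hmul
  rw [Matrix.det_mul, hdetV, hdetD] at this
  rw [mul_comm T P] at this
  exact mul_left_cancel₀ hPne this

/-- The symmetrization map `π_n : ℂ^n → ℂ^n`, whose `k`-th component is the `k`-th
elementary symmetric polynomial of the coordinates. -/
noncomputable def symmMap (n : ℕ) (lam : Fin n → ℂ) : Fin n → ℂ :=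
  fun k => ∑ t ∈ Finset.powersetCard (k.1 + 1) Finset.univ, ∏ i ∈ t, lam i

/-- The partial derivative `∂π_{n,k}/∂λ_j` is the `k`-th elementary symmetric function of the
variables other than `λ_j`. -/
lemma fderiv_symmMap_apply (n : ℕ) (lam : Fin n → ℂ) (k j : Fin n) :
    fderiv ℂ (fun x => symmMap n x k) lam (Pi.single j 1) =
      ∑ t ∈ (Finset.univ.erase j).powersetCard k.1, ∏ i ∈ t, lam i := by
  have hd : HasFDerivAt (fun x : Fin n → ℂ => symmMap n x k)
      ((∑ t ∈ Finset.powersetCard (k.1 + 1) (Finset.univ : Finset (Fin n)),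
        ∑ i ∈ t, (∏ i' ∈ t.erase i, lam i') • ContinuousLinearMap.proj i :
        (Fin n → ℂ) →L[ℂ] ℂ)) lam := by
    unfold symmMap
    exact HasFDerivAt.fun_sum fun t _ => hasFDerivAt_finset_prod
  rw [hd.fderiv]
  rw [ContinuousLinearMap.sum_apply]
  have step1 : ∀ t ∈ Finset.powersetCard (k.1 + 1) (Finset.univ : Finset (Fin n)),
      ((∑ i ∈ t, (∏ i' ∈ t.erase i, lam i') • ContinuousLinearMap.proj i :
        (Fin n → ℂ) →L[ℂ] ℂ)) (Pi.single j 1)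
      = if j ∈ t then ∏ i' ∈ t.erase j, lam i' else 0 := by
    intro t _
    rw [ContinuousLinearMap.sum_apply]
    rw [show (∑ i ∈ t, (((∏ i' ∈ t.erase i, lam i') • ContinuousLinearMap.proj i :
        (Fin n → ℂ) →L[ℂ] ℂ))
        (Pi.single j (1:ℂ))) = ∑ i ∈ t, if i = j then ∏ i' ∈ t.erase i, lam i' else 0 from
      Finset.sum_congr rfl fun i _ => by
        simp [ContinuousLinearMap.proj_apply, Pi.single_apply, eq_comm]]
    rw [Finset.sum_ite_eq' t j fun i => ∏ i' ∈ t.erase i, lam i']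
  rw [Finset.sum_congr rfl step1, ← Finset.sum_filter]
  refine Finset.sum_nbij' (fun t => t.erase j) (fun s => insert j s) ?_ ?_ ?_ ?_ ?_
  · intro t ht
    simp only [Finset.mem_filter, Finset.mem_powersetCard] at ht
    obtain ⟨⟨_, hcard⟩, hj⟩ := ht
    refine Finset.mem_powersetCard.2 ⟨?_, ?_⟩
    · exact Finset.erase_subset_erase j (Finset.subset_univ t)
    · rw [Finset.card_erase_of_mem hj, hcard]
      omega
  · intro s hs
    rw [Finset.mem_powersetCard] at hs
    obtain ⟨hsub, hcard⟩ := hs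
    have hjs : j ∉ s := fun h => (Finset.mem_erase.1 (hsub h)).1 rfl
    refine Finset.mem_filter.2 ⟨Finset.mem_powersetCard.2 ⟨Finset.subset_univ _, ?_⟩,
      Finset.mem_insert_self j s⟩
    rw [Finset.card_insert_of_notMem hjs, hcard]
  · intro t ht
    exact Finset.insert_erase (Finset.mem_filter.1 ht).2
  · intro s hs
    rw [Finset.mem_powersetCard] at hs
    exact Finset.erase_insert fun h => (Finset.mem_erase.1 (hs.1 h)).1 rfl
  · intro t _
    rfl

/-- The determinant of the Jacobian matrix `(∂π_{n,k}/∂λ_j)` of the symmetrization map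
at `λ` equals `∏_{i<j} (λ_i − λ_j)`. -/
theorem det_jacobian_symmMap (n : ℕ) (lam : Fin n → ℂ) :
    Matrix.det (Matrix.of fun k j : Fin n =>
        fderiv ℂ (fun x => symmMap n x k) lam (Pi.single j 1))
      = ∏ i : Fin n, ∏ j ∈ Finset.Ioi i, (lam i - lam j) := by
  have hM : (Matrix.of fun k j : Fin n =>
      fderiv ℂ (fun x => symmMap n x k) lam (Pi.single j 1))
      = (MvPolynomial.aeval lam : MvPolynomial (Fin n) ℂ →ₐ[ℂ] ℂ).mapMatrix
        (Matrix.of fun k j : Fin n => ∑ t ∈ (Finset.univ.erase j).powersetCard k.1,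
          ∏ i ∈ t, (MvPolynomial.X i : MvPolynomial (Fin n) ℂ)) := by
    ext k j
    simp only [AlgHom.mapMatrix_apply, Matrix.map_apply, Matrix.of_apply, map_sum, map_prod,
      MvPolynomial.aeval_X]
    exact fderiv_symmMap_apply n lam k j
  rw [hM, ← AlgHom.map_det,
    det_esymm_matrix (fun i => (MvPolynomial.X i : MvPolynomial (Fin n) ℂ))
      MvPolynomial.X_injective]
  simp only [map_prod, map_sub, MvPolynomial.aeval_X]
end

section
/- The restriction of the symmetrization map to the unit polydisc is a proper map onto the symmetrized polydisc: for every compact subset K of ℂ^n with K ⊆ 𝔾_n, the set π_n^{-1}(K) ∩ 𝔻^n is compact. -/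
/-- The open unit polydisc `𝔻^n ⊆ ℂ^n`. -/
def polydisc (n : ℕ) : Set (Fin n → ℂ) := {z | ∀ i, ‖z i‖ < 1}

/-- The symmetrized polydisc `𝔾_n = π_n(𝔻^n)`. -/
noncomputable def symmPolydisc (n : ℕ) : Set (Fin n → ℂ) := symmMap n '' polydisc n

/-- If two tuples have the same image under the symmetrization map, then they give the same
multiset of coordinates. -/
lemma esymm_eq_of_symmMap_eq {n : ℕ} {z w : Fin n → ℂ} (h : symmMap n z = symmMap n w) :
    (Finset.univ.val.map z) = (Finset.univ.val.map w) := by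
  set Mz := Finset.univ.val.map z with hMz
  set Mw := Finset.univ.val.map w with hMw
  have cardz : Multiset.card Mz = n := by simp [hMz]
  have cardw : Multiset.card Mw = n := by simp [hMw]
  have hes : ∀ j, Mz.esymm j = Mw.esymm j := by
    intro j
    rcases Nat.eq_zero_or_pos j with rfl | hj
    · simp [Multiset.esymm]
    · rcases le_or_gt j n with hjn | hjn
      · obtain ⟨k, hk⟩ : ∃ k : Fin n, j = k.1 + 1 :=
          ⟨⟨j - 1, by omega⟩, by simp; omega⟩
        subst hk
        rw [Finset.esymm_map_val, Finset.esymm_map_val]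
        have := congrFun h k
        simpa [symmMap] using this
      · have hz : Mz.esymm j = 0 := by
          rw [Multiset.esymm, Multiset.powersetCard_eq_empty _ (by omega)]
          simp
        have hw : Mw.esymm j = 0 := by
          rw [Multiset.esymm, Multiset.powersetCard_eq_empty _ (by omega)]
          simp
        rw [hz, hw]
  have hpoly : (Mz.map fun a => Polynomial.X - Polynomial.C a).prod
      = (Mw.map fun a => Polynomial.X - Polynomial.C a).prod := by
    ext k
    rcases le_or_gt k n with hk | hk
    · rw [Multiset.prod_X_sub_C_coeff Mz (by omega), Multiset.prod_X_sub_C_coeff Mw (by omega),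
        cardz, cardw, hes]
    · rw [Polynomial.coeff_eq_zero_of_natDegree_lt, Polynomial.coeff_eq_zero_of_natDegree_lt]
      · rw [Polynomial.natDegree_multiset_prod_X_sub_C_eq_card, cardw]; exact hk
      · rw [Polynomial.natDegree_multiset_prod_X_sub_C_eq_card, cardz]; exact hk
  have := congrArg Polynomial.roots hpoly
  rwa [Polynomial.roots_multiset_prod_X_sub_C, Polynomial.roots_multiset_prod_X_sub_C] at this

/-- The restriction `π_n : 𝔻^n → 𝔾_n` is proper: preimages (within `𝔻^n`) of compact
subsets of `𝔾_n` are compact. -/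
theorem symmMap_restrict_isProper (n : ℕ) (K : Set (Fin n → ℂ))
    (hK : IsCompact K) (hKsub : K ⊆ symmPolydisc n) :
    IsCompact (symmMap n ⁻¹' K ∩ polydisc n) := by
  have hcont : Continuous (symmMap n) := by
    refine continuous_pi fun k => ?_
    exact continuous_finset_sum _ fun t _ => continuous_finset_prod _ fun i _ =>
      continuous_apply i
  have hclosed : IsClosed (symmMap n ⁻¹' K) := (hK.isClosed).preimage hcont
  have hCP : IsCompact {z : Fin n → ℂ | ∀ i, ‖z i‖ ≤ 1} := by
    have : {z : Fin n → ℂ | ∀ i, ‖z i‖ ≤ 1}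
        = Set.pi Set.univ (fun _ : Fin n => Metric.closedBall (0 : ℂ) 1) := by
      ext z; simp [Set.mem_pi]
    rw [this]
    exact isCompact_univ_pi fun i => isCompact_closedBall 0 1
  have heq : symmMap n ⁻¹' K ∩ polydisc n = symmMap n ⁻¹' K ∩ {z | ∀ i, ‖z i‖ ≤ 1} := by
    apply Set.Subset.antisymm
    · exact Set.inter_subset_inter_right _ fun z hz i => (hz i).le
    · rintro z ⟨hzK, _⟩
      refine ⟨hzK, fun i => ?_⟩
      obtain ⟨w, hw, hww⟩ := hKsub hzK
      have hmult := esymm_eq_of_symmMap_eq (hww.symm ▸ rfl : symmMap n z = symmMap n w)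
      have : z i ∈ Finset.univ.val.map w := by
        rw [← hmult]
        exact Multiset.mem_map.2 ⟨i, Finset.mem_univ_val i, rfl⟩
      obtain ⟨j, _, hj⟩ := Multiset.mem_map.1 this
      rw [← hj]; exact hw j
  rw [heq]
  exact hCP.inter_left hclosed
end

section
/- The symmetrized polydisc 𝔾_n = π_n(𝔻^n) is a bounded domain in ℂ^n: it is an open, connected and bounded subset of ℂ^n. -/
section Aux
open Polynomial

/-- The multiset of coordinates of a point of `ℂ^n`. -/
noncomputable def msOf (n : ℕ) (lam : Fin n → ℂ) : Multiset ℂ :=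
  Multiset.map lam Finset.univ.val

lemma card_msOf (n : ℕ) (lam : Fin n → ℂ) : Multiset.card (msOf n lam) = n := by
  simp [msOf]

lemma symmMap_eq_esymm (n : ℕ) (lam : Fin n → ℂ) (k : Fin n) :
    symmMap n lam k = (msOf n lam).esymm (k.1 + 1) := by
  rw [symmMap, msOf, Finset.esymm_map_val]

lemma mem_polydisc_iff (n : ℕ) (lam : Fin n → ℂ) :
    lam ∈ polydisc n ↔ ∀ z ∈ msOf n lam, ‖z‖ < 1 := by
  simp only [polydisc, Set.mem_setOf_eq, msOf, Multiset.mem_map]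
  constructor
  · rintro h z ⟨i, -, rfl⟩
    exact h i
  · intro h i
    exact h _ ⟨i, Finset.mem_univ i, rfl⟩

/-- The monic polynomial whose roots are the coordinates of `lam`. -/
noncomputable def charPoly (n : ℕ) (lam : Fin n → ℂ) : Polynomial ℂ :=
  ((msOf n lam).map fun r => X - C r).prod

lemma monic_charPoly (n : ℕ) (lam : Fin n → ℂ) : (charPoly n lam).Monic := by
  refine monic_multiset_prod_of_monic _ _ fun p hp => monic_X_sub_C p

lemma natDegree_charPoly (n : ℕ) (lam : Fin n → ℂ) : (charPoly n lam).natDegree = n := by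
  rw [charPoly, natDegree_multiset_prod_X_sub_C_eq_card, card_msOf]

lemma roots_charPoly (n : ℕ) (lam : Fin n → ℂ) : (charPoly n lam).roots = msOf n lam :=
  roots_multiset_prod_X_sub_C _

lemma coeff_charPoly (n : ℕ) (lam : Fin n → ℂ) {k : ℕ} (hk : k ≤ n) :
    (charPoly n lam).coeff k = (-1) ^ (n - k) * (msOf n lam).esymm (n - k) := by
  rw [charPoly]
  rw [Multiset.prod_X_sub_C_coeff _ (by rw [card_msOf]; exact hk), card_msOf]

lemma msOf_eq_of_symmMap_eq {n : ℕ} {lam mu : Fin n → ℂ}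
    (h : symmMap n lam = symmMap n mu) : msOf n lam = msOf n mu := by
  have hP : charPoly n lam = charPoly n mu := by
    ext k
    rcases le_or_gt k n with hk | hk
    · rw [coeff_charPoly n lam hk, coeff_charPoly n mu hk]
      rcases eq_or_lt_of_le hk with rfl | hk'
      · simp [Multiset.esymm]
      · have hnk : n - k = (n - k - 1) + 1 := by omega
        have h1 := symmMap_eq_esymm n lam ⟨n - k - 1, by omega⟩
        have h2 := symmMap_eq_esymm n mu ⟨n - k - 1, by omega⟩
        simp only at h1 h2
        rw [hnk, ← h1, ← h2, h]
    · rw [coeff_eq_zero_of_natDegree_lt (by rw [natDegree_charPoly]; exact hk),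
        coeff_eq_zero_of_natDegree_lt (by rw [natDegree_charPoly]; exact hk)]
  have := congrArg Polynomial.roots hP
  rwa [roots_charPoly, roots_charPoly] at this

lemma exists_fun_of_card (n : ℕ) (s : Multiset ℂ) (h : Multiset.card s = n) :
    ∃ lam : Fin n → ℂ, msOf n lam = s := by
  have hl : s.toList.length = n := by rw [Multiset.length_toList, h]
  refine ⟨fun i => s.toList.get (Fin.cast hl.symm i), ?_⟩
  rw [msOf, Fin.univ_val_map]
  have h2 : List.ofFn (fun i => s.toList.get (Fin.cast hl.symm i)) = s.toList := by
    have := hl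
    subst this
    simp only [Fin.cast_refl, List.get_eq_getElem]
    exact List.ofFn_getElem (xs := s.toList)
  rw [h2, Multiset.coe_toList]

lemma symmMap_surjective (n : ℕ) : Function.Surjective (symmMap n) := by
  intro c
  rcases Nat.eq_zero_or_pos n with rfl | hn
  · exact ⟨0, funext fun k => k.elim0⟩
  set q : Polynomial ℂ := ∑ k : Fin n, C ((-1) ^ (k.1 + 1) * c k) * X ^ (n - 1 - k.1) with hq
  have hqdeg : q.degree < (n : ℕ) := by
    refine lt_of_le_of_lt (degree_sum_le _ _) ?_
    rw [Finset.sup_lt_iff (by exact_mod_cast WithBot.bot_lt_coe (n : ℕ))]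
    intro k _
    refine lt_of_le_of_lt (degree_C_mul_X_pow_le _ _) ?_
    exact_mod_cast (by omega : n - 1 - k.1 < n)
  set p : Polynomial ℂ := X ^ n + q with hp
  have hmonic : p.Monic := monic_X_pow_add hqdeg
  have hdeg : p.natDegree = n := by
    have : p.degree = n := by
      rw [hp, degree_add_eq_left_of_degree_lt (by rwa [degree_X_pow]), degree_X_pow]
    exact natDegree_eq_of_degree_eq_some this
  have hsplits : Splits p := IsAlgClosed.splits p
  have hcard : Multiset.card p.roots = n := by
    rw [splits_iff_card_roots.mp hsplits, hdeg]
  obtain ⟨lam, hlam⟩ := exists_fun_of_card n p.roots hcard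
  refine ⟨lam, funext fun k => ?_⟩
  have hk1 : k.1 ≤ n - 1 := by omega
  have hcoeff : p.coeff (n - 1 - k.1) = (-1) ^ (k.1 + 1) * c k := by
    rw [hp, coeff_add, coeff_X_pow, if_neg (by omega), zero_add, hq, finset_sum_coeff]
    rw [Finset.sum_eq_single k]
    · rw [coeff_C_mul, coeff_X_pow, if_pos rfl, mul_one]
    · intro j _ hj
      rw [coeff_C_mul, coeff_X_pow, if_neg (by
        intro hjk
        exact hj (Fin.ext (by omega))), mul_zero]
    · intro h
      exact absurd (Finset.mem_univ k) h
  have hvieta := Polynomial.coeff_eq_esymm_roots_of_card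
    (p := p) (by rw [hcard, hdeg]) (k := n - 1 - k.1) (by omega)
  rw [hmonic.leadingCoeff, one_mul, hdeg] at hvieta
  have hnk : n - (n - 1 - k.1) = k.1 + 1 := by omega
  rw [hnk, hcoeff] at hvieta
  have hesymm : p.roots.esymm (k.1 + 1) = c k := by
    have hne : ((-1 : ℂ)) ^ (k.1 + 1) ≠ 0 := by simp
    exact (mul_left_cancel₀ hne hvieta).symm
  rw [symmMap_eq_esymm n lam k, hlam, hesymm]

lemma continuous_symmMap (n : ℕ) : Continuous (symmMap n) := by
  refine continuous_pi fun k => ?_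
  refine continuous_finset_sum _ fun t _ => ?_
  exact continuous_finset_prod _ fun i _ => continuous_apply i

lemma norm_coord_le (n : ℕ) (lam : Fin n → ℂ) (i : Fin n) :
    ‖lam i‖ ≤ max 1 (n * ‖symmMap n lam‖) := by
  set x : ℂ := lam i with hx
  set p : Polynomial ℂ := charPoly n lam with hpdef
  have hxroot : p.eval x = 0 := by
    rw [hpdef, charPoly, eval_multiset_prod]
    refine Multiset.prod_eq_zero ?_
    rw [Multiset.map_map]
    refine Multiset.mem_map.mpr ⟨x, ?_, by simp⟩
    exact Multiset.mem_map.mpr ⟨i, Finset.mem_univ i, rfl⟩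
  by_contra hcon
  push_neg at hcon
  rw [max_lt_iff] at hcon
  obtain ⟨h1, h2⟩ := hcon
  have hn : 0 < n := i.pos
  set R : ℝ := ‖symmMap n lam‖ with hR
  have hRnn : 0 ≤ R := norm_nonneg _
  have hcoeffbound : ∀ k, k < n → ‖p.coeff k‖ ≤ R := by
    intro k hk
    rw [hpdef, coeff_charPoly n lam hk.le]
    have hnk : n - k = (n - k - 1) + 1 := by omega
    have h1' := symmMap_eq_esymm n lam ⟨n - k - 1, by omega⟩
    simp only at h1'
    rw [hnk, ← h1', norm_mul, norm_pow, norm_neg, norm_one, one_pow, one_mul]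
    exact norm_le_pi_norm (symmMap n lam) _
  have hpdeg : p.natDegree = n := by rw [hpdef, natDegree_charPoly]
  have heval : p.eval x = ∑ k ∈ Finset.range (n + 1), p.coeff k * x ^ k := by
    have h := eval_eq_sum_range (p := p) x
    rwa [hpdeg] at h
  have hxn : x ^ n = -∑ k ∈ Finset.range n, p.coeff k * x ^ k := by
    have h0 : (0 : ℂ) = ∑ k ∈ Finset.range (n + 1), p.coeff k * x ^ k := by
      rw [← heval, hxroot]
    rw [Finset.sum_range_succ] at h0
    have hcn : p.coeff n = 1 := by
      have hm := (monic_charPoly n lam)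
      rw [Monic, leadingCoeff, natDegree_charPoly, ← hpdef] at hm
      exact hm
    rw [hcn, one_mul] at h0
    linear_combination -h0
  have hxpos : (0 : ℝ) < ‖x‖ := lt_trans zero_lt_one h1
  have hb : ‖x‖ ^ n ≤ n * R * ‖x‖ ^ (n - 1) := by
    calc ‖x‖ ^ n = ‖x ^ n‖ := (norm_pow x n).symm
    _ = ‖∑ k ∈ Finset.range n, p.coeff k * x ^ k‖ := by rw [hxn, norm_neg]
    _ ≤ ∑ k ∈ Finset.range n, ‖p.coeff k * x ^ k‖ := norm_sum_le _ _
    _ ≤ ∑ _k ∈ Finset.range n, R * ‖x‖ ^ (n - 1) := by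
        refine Finset.sum_le_sum fun k hk => ?_
        rw [norm_mul, norm_pow]
        have h1k := Finset.mem_range.mp hk
        exact mul_le_mul (hcoeffbound k h1k)
          (pow_le_pow_right₀ (le_of_lt h1) (by omega)) (by positivity) hRnn
    _ = n * R * ‖x‖ ^ (n - 1) := by
        rw [Finset.sum_const, Finset.card_range, nsmul_eq_mul]; ring
  have hc : ‖x‖ ^ n < ‖x‖ ^ n := by
    calc ‖x‖ ^ n ≤ n * R * ‖x‖ ^ (n - 1) := hb
    _ < ‖x‖ * ‖x‖ ^ (n - 1) := mul_lt_mul_of_pos_right h2 (pow_pos hxpos _)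
    _ = ‖x‖ ^ n := by
        have hn1 : n - 1 + 1 = n := by omega
        rw [← pow_succ', hn1]
  exact lt_irrefl _ hc

lemma polydisc_eq_ball (n : ℕ) : polydisc n = Metric.ball (0 : Fin n → ℂ) 1 := by
  ext z
  rw [Metric.mem_ball, dist_zero_right]
  simp only [polydisc, Set.mem_setOf_eq]
  exact (pi_norm_lt_iff one_pos).symm

lemma isClosedMap_symmMap (n : ℕ) : IsClosedMap (symmMap n) := by
  have hproper : IsProperMap (symmMap n) := by
    rw [isProperMap_iff_isCompact_preimage]
    refine ⟨continuous_symmMap n, fun K hK => ?_⟩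
    obtain ⟨R, hR⟩ := isBounded_iff_forall_norm_le.mp hK.isBounded
    refine Metric.isCompact_of_isClosed_isBounded (hK.isClosed.preimage (continuous_symmMap n)) ?_
    rw [isBounded_iff_forall_norm_le]
    refine ⟨max 1 (n * R), fun lam hlam => ?_⟩
    have hmax : (0:ℝ) ≤ max 1 (n * R) := le_trans zero_le_one (le_max_left _ _)
    rw [pi_norm_le_iff_of_nonneg hmax]
    intro i
    refine (norm_coord_le n lam i).trans (max_le_max le_rfl ?_)
    exact mul_le_mul_of_nonneg_left (hR _ hlam) (Nat.cast_nonneg n)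
  exact hproper.isClosedMap

end Aux

/-- The symmetrized polydisc `𝔾_n` is a bounded domain in `ℂ^n`: open, connected
and bounded. -/
theorem symmPolydisc_isOpen_isConnected_isBounded (n : ℕ) :
    IsOpen (symmPolydisc n) ∧ IsConnected (symmPolydisc n) ∧
      Bornology.IsBounded (symmPolydisc n) := by
  refine ⟨?_, ?_, ?_⟩
  · have heq : symmPolydisc n = (symmMap n '' (polydisc n)ᶜ)ᶜ := by
      ext c
      constructor
      · rintro ⟨lam, hlam, rfl⟩ ⟨mu, hmu, hmusm⟩
        refine hmu ((mem_polydisc_iff n mu).mpr ?_)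
        rw [msOf_eq_of_symmMap_eq hmusm]
        exact (mem_polydisc_iff n lam).mp hlam
      · intro hc
        obtain ⟨lam, rfl⟩ := symmMap_surjective n c
        by_cases h' : lam ∈ polydisc n
        · exact ⟨lam, h', rfl⟩
        · exact absurd ⟨lam, h', rfl⟩ hc
    rw [heq, isOpen_compl_iff]
    refine isClosedMap_symmMap n _ ?_
    rw [polydisc_eq_ball]
    exact Metric.isOpen_ball.isClosed_compl
  · refine IsConnected.image ?_ _ (continuous_symmMap n).continuousOn
    rw [polydisc_eq_ball]
    exact ⟨⟨0, Metric.mem_ball_self one_pos⟩, (convex_ball (0 : Fin n → ℂ) 1).isPreconnected⟩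
  · rw [isBounded_iff_forall_norm_le]
    refine ⟨2 ^ n, ?_⟩
    rintro c ⟨lam, hlam, rfl⟩
    rw [pi_norm_le_iff_of_nonneg (by positivity)]
    intro k
    have hcard : ((Finset.powersetCard (k.1 + 1) (Finset.univ : Finset (Fin n))).card : ℝ)
        ≤ 2 ^ n := by
      have hsub : Finset.powersetCard (k.1 + 1) (Finset.univ : Finset (Fin n))
          ⊆ (Finset.univ : Finset (Fin n)).powerset :=
        fun t ht => Finset.mem_powerset.mpr (Finset.mem_powersetCard.mp ht).1
      have := Finset.card_le_card hsub
      rw [Finset.card_powerset, Finset.card_univ, Fintype.card_fin] at this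
      exact_mod_cast this
    calc ‖symmMap n lam k‖
        ≤ ∑ t ∈ Finset.powersetCard (k.1 + 1) Finset.univ, ‖∏ i ∈ t, lam i‖ :=
          norm_sum_le _ _
      _ ≤ ∑ _t ∈ Finset.powersetCard (k.1 + 1) (Finset.univ : Finset (Fin n)), (1 : ℝ) := by
          refine Finset.sum_le_sum fun t _ => ?_
          rw [norm_prod]
          exact Finset.prod_le_one (fun i _ => norm_nonneg _) (fun i _ => (hlam i).le)
      _ = ((Finset.powersetCard (k.1 + 1) (Finset.univ : Finset (Fin n))).card : ℝ) := by
          rw [Finset.sum_const, nsmul_eq_mul, mul_one]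
      _ ≤ 2 ^ n := hcard
end

section
/- There exists a polynomial H_1 in 2n complex variables such that for all λ, w ∈ ℂ^n with 1 − λ_j w_k ≠ 0 for all 1 ≤ j, k ≤ n, one has det[(1 − λ_j w_k)^{−2}]_{1≤j,k≤n} · ∏_{i=1}^n ∏_{j=1}^n (1 − λ_i w_j)² = H_1(π_n(λ), π_n(w)) · ∏_{1≤j<k≤n}(λ_j − λ_k) · ∏_{1≤j<k≤n}(w_j − w_k). -/
open MvPolynomial

open MvPolynomial

namespace DetProofAux

variable {σ : Type*}

/-- Substituting `a ↦ b` leaves `P` unchanged mod `X a - X b`. -/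
lemma sub_dvd_sub_aeval [DecidableEq σ] (a b : σ) (P : MvPolynomial σ ℂ) :
    (X a - X b) ∣ P - aeval (fun c => if c = a then X b else X c) P := by
  induction P using MvPolynomial.induction_on with
  | C r => simp
  | add p q hp hq =>
      have h := dvd_add hp hq
      convert h using 1
      rw [map_add]; ring
  | mul_X p i hp =>
      have h2 : (X a - X b : MvPolynomial σ ℂ) ∣
          (X i - (if i = a then X b else X i)) := by
        by_cases h : i = a
        · subst h; simp
        · simp [h]
      have key : p * X i - aeval (fun c => if c = a then X b else X c) (p * X i)
          = (p - aeval (fun c => if c = a then X b else X c) p) * X i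
            + aeval (fun c => if c = a then X b else X c) p
              * (X i - (if i = a then X b else X i)) := by
        rw [map_mul, aeval_X]; ring
      rw [key]
      exact dvd_add (hp.mul_right _) (h2.mul_left _)

lemma dvd_of_swap_neg [DecidableEq σ] {a b : σ} (hab : a ≠ b) {P : MvPolynomial σ ℂ}
    (h : rename (⇑(Equiv.swap a b)) P = -P) : (X a - X b) ∣ P := by
  set g : σ → MvPolynomial σ ℂ := fun c => if c = a then X b else X c with hg
  have hgs : g ∘ ⇑(Equiv.swap a b) = g := by
    funext c
    rcases eq_or_ne c a with rfl | hca
    · simp [hg, Equiv.swap_apply_left, hab.symm]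
    rcases eq_or_ne c b with rfl | hcb
    · simp [hg, Equiv.swap_apply_right, hab.symm]
    · simp [hg, Equiv.swap_apply_of_ne_of_ne hca hcb]
  have h0 : aeval g P = 0 := by
    have h1 : aeval g (rename (⇑(Equiv.swap a b)) P) = aeval g P := by
      rw [aeval_rename, hgs]
    rw [h, map_neg] at h1
    have h2 : (2 : MvPolynomial σ ℂ) * aeval g P = 0 := by linear_combination - h1
    rcases mul_eq_zero.mp h2 with h3 | h3
    · exact absurd h3 two_ne_zero
    · exact h3
  have := sub_dvd_sub_aeval a b P
  rwa [h0, sub_zero] at this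

lemma prime_X_sub_X [DecidableEq σ] {a b : σ} (hab : b ≠ a) :
    Prime (X a - X b : MvPolynomial σ ℂ) := by
  let e : Option {c : σ // c ≠ a} ≃ σ := Equiv.optionSubtypeNe a
  let E := (renameEquiv ℂ e.symm).trans (optionEquivLeft ℂ {c : σ // c ≠ a})
  rw [← MulEquiv.prime_iff E.toRingEquiv.toMulEquiv]
  have : E (X a - X b) = Polynomial.X - Polynomial.C (X ⟨b, hab⟩) := by
    simp only [E, AlgEquiv.trans_apply, map_sub, renameEquiv_apply, rename_X]
    rw [Equiv.optionSubtypeNe_symm_self, Equiv.optionSubtypeNe_symm_of_ne hab,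
      optionEquivLeft_X_none, optionEquivLeft_X_some]
  rw [show E.toRingEquiv.toMulEquiv (X a - X b) = E (X a - X b) from rfl, this]
  exact Polynomial.prime_X_sub_C _

lemma not_assoc [DecidableEq σ] {a b c d : σ} (hab : a ≠ b) (hcd : c ≠ d)
    (h1 : ¬(a = c ∧ b = d)) (h2 : ¬(a = d ∧ b = c)) :
    ¬ Associated (X a - X b : MvPolynomial σ ℂ) (X c - X d) := by
  intro h
  obtain ⟨e, he, hea, heb⟩ : ∃ e, (e = c ∨ e = d) ∧ e ≠ a ∧ e ≠ b := by
    by_cases hc : c ≠ a ∧ c ≠ b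
    · exact ⟨c, Or.inl rfl, hc.1, hc.2⟩
    · push_neg at hc
      by_cases hca : c = a
      · subst hca
        have hbd : b ≠ d := fun hbd => h1 ⟨rfl, hbd⟩
        exact ⟨d, Or.inr rfl, fun hda => hcd hda.symm, fun hdb => hbd hdb.symm⟩
      · have hcb : c = b := hc hca
        subst hcb
        have had : a ≠ d := fun had => h2 ⟨had, rfl⟩
        exact ⟨d, Or.inr rfl, fun hda => had hda.symm, fun hdb => hcd hdb.symm⟩
  obtain ⟨q, hq⟩ := h.dvd
  set x : σ → ℂ := fun t => if t = e then 1 else 0 with hx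
  have h3 := congrArg (eval x) hq
  rw [map_mul, map_sub, map_sub, eval_X, eval_X, eval_X, eval_X] at h3
  have hxa : x a = 0 := by simp [hx, Ne.symm hea]
  have hxb : x b = 0 := by simp [hx, Ne.symm heb]
  rw [hxa, hxb, sub_zero, zero_mul] at h3
  rcases he with rfl | rfl
  · have h4 : x e = 1 := by simp [hx]
    have h5 : x d = 0 := by simp [hx, Ne.symm hcd]
    rw [h4, h5] at h3; norm_num at h3
  · have h4 : x e = 1 := by simp [hx]
    have h5 : x c = 0 := by simp [hx, hcd]
    rw [h4, h5] at h3; norm_num at h3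

lemma prod_primes_dvd' {ι : Type*} [DecidableEq ι] {s : Finset ι}
    {p : ι → MvPolynomial σ ℂ} :
    ∀ {P : MvPolynomial σ ℂ},
    (∀ i ∈ s, Prime (p i)) →
    (∀ i ∈ s, ∀ j ∈ s, i ≠ j → ¬ Associated (p i) (p j)) →
    (∀ i ∈ s, p i ∣ P) → (∏ i ∈ s, p i) ∣ P := by
  classical
  induction s using Finset.induction_on with
  | empty => simp
  | @insert a s ha ih =>
      intro P hprime hassoc hdvd
      rw [Finset.prod_insert ha]
      obtain ⟨m, rfl⟩ := hdvd a (Finset.mem_insert_self a s)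
      refine mul_dvd_mul_left _ (ih (fun i hi => hprime i (Finset.mem_insert_of_mem hi))
        (fun i hi j hj hij => hassoc i (Finset.mem_insert_of_mem hi) j
          (Finset.mem_insert_of_mem hj) hij) (fun i hi => ?_))
      have hpa : Prime (p a) := hprime a (Finset.mem_insert_self a s)
      have hpi : Prime (p i) := hprime i (Finset.mem_insert_of_mem hi)
      have hdv : p i ∣ p a * m := hdvd i (Finset.mem_insert_of_mem hi)
      rcases hpi.dvd_or_dvd hdv with h | h
      · exact absurd (hpi.associated_of_dvd hpa h)
          (hassoc i (Finset.mem_insert_of_mem hi) a (Finset.mem_insert_self a s)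
            (fun hh => ha (hh ▸ hi)))
      · exact h

end DetProofAux

open MvPolynomial Finset

namespace DetProofAux2

variable {n : ℕ}

/-- The polynomial matrix whose determinant is `det[(1-λ_j w_k)⁻²]·∏(1-λ_i w_j)²`. -/
noncomputable def NP (n : ℕ) : Matrix (Fin n) (Fin n) (MvPolynomial (Fin n ⊕ Fin n) ℂ) :=
  Matrix.of fun j k => ∏ m ∈ Finset.univ.erase k, (1 - X (Sum.inl j) * X (Sum.inr m)) ^ 2

noncomputable def Vl (n : ℕ) : MvPolynomial (Fin n ⊕ Fin n) ℂ :=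
  ∏ j, ∏ k ∈ Finset.Ioi j, (X (Sum.inl j) - X (Sum.inl k))

noncomputable def Vw (n : ℕ) : MvPolynomial (Fin n ⊕ Fin n) ℂ :=
  ∏ j, ∏ k ∈ Finset.Ioi j, (X (Sum.inr j) - X (Sum.inr k))

lemma eval_Pdet (lam w : Fin n → ℂ) (h : ∀ j k, 1 - lam j * w k ≠ 0) :
    eval (Sum.elim lam w) (NP n).det
      = Matrix.det (Matrix.of fun j k : Fin n => ((1 - lam j * w k) ^ 2)⁻¹)
        * ∏ i : Fin n, ∏ j : Fin n, (1 - lam i * w j) ^ 2 := by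
  rw [RingHom.map_det]
  have key : (NP n).map (eval (Sum.elim lam w)) = Matrix.of fun j k =>
      (∏ m, (1 - lam j * w m) ^ 2) *
        (Matrix.of fun j k : Fin n => ((1 - lam j * w k) ^ 2)⁻¹) j k := by
    ext j k
    simp only [Matrix.map_apply, NP, Matrix.of_apply, map_prod, map_sub, map_one, map_mul,
      map_pow, eval_X, Sum.elim_inl, Sum.elim_inr]
    rw [← Finset.mul_prod_erase Finset.univ (fun m => (1 - lam j * w m) ^ 2) (Finset.mem_univ k),
      mul_comm ((1 - lam j * w k) ^ 2), mul_assoc,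
      mul_inv_cancel₀ (pow_ne_zero 2 (h j k)), mul_one]
  have hmm : (eval (Sum.elim lam w)).mapMatrix (NP n) = (NP n).map (eval (Sum.elim lam w)) := rfl
  rw [hmm, key, Matrix.det_mul_column]
  rw [mul_comm]

lemma rename_NP_L (τ : Equiv.Perm (Fin n)) :
    rename (Sum.map ⇑τ id) (NP n).det
      = ((Equiv.Perm.sign τ : ℤ) : MvPolynomial (Fin n ⊕ Fin n) ℂ) * (NP n).det := by
  apply MvPolynomial.funext; intro x
  rw [eval_rename, map_mul, RingHom.map_det, RingHom.map_det]
  have key : (NP n).map (eval (x ∘ Sum.map ⇑τ id)) = ((NP n).map (eval x)).submatrix ⇑τ id := by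
    ext j k
    simp [NP, Sum.map]
  have hmm : ∀ y : Fin n ⊕ Fin n → ℂ, (eval y).mapMatrix (NP n) = (NP n).map (eval y) := fun _ => rfl
  rw [hmm, hmm, key, Matrix.det_permute, map_intCast]

lemma rename_NP_R (τ : Equiv.Perm (Fin n)) :
    rename (Sum.map id ⇑τ) (NP n).det
      = ((Equiv.Perm.sign τ : ℤ) : MvPolynomial (Fin n ⊕ Fin n) ℂ) * (NP n).det := by
  apply MvPolynomial.funext; intro x
  rw [eval_rename, map_mul, RingHom.map_det, RingHom.map_det]
  have him : ∀ k : Fin n, (Finset.univ.erase k).image ⇑τ = Finset.univ.erase (τ k) := by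
    intro k
    ext m
    simp only [Finset.mem_image, Finset.mem_erase, Finset.mem_univ, and_true]
    constructor
    · rintro ⟨m', hm', rfl⟩
      exact fun hh => hm' (τ.injective hh)
    · intro hm
      exact ⟨τ.symm m, fun hh => hm (by rw [← τ.apply_symm_apply m, hh]),
        τ.apply_symm_apply m⟩
  have key : (NP n).map (eval (x ∘ Sum.map id ⇑τ)) = ((NP n).map (eval x)).submatrix id ⇑τ := by
    ext j k
    simp only [Matrix.map_apply, NP, Matrix.of_apply, map_prod, map_sub, map_one, map_mul,
      map_pow, eval_X, Function.comp_apply, Sum.map_inl, Sum.map_inr, id_eq,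
      Matrix.submatrix_apply]
    rw [← him k, Finset.prod_image (fun a _ b _ h => τ.injective h)]
  have hmm : ∀ y : Fin n ⊕ Fin n → ℂ, (eval y).mapMatrix (NP n) = (NP n).map (eval y) := fun _ => rfl
  rw [hmm, hmm, key, Matrix.det_permute', map_intCast]

lemma prod_sub_eq (v : Fin n → ℂ) :
    ∏ j, ∏ k ∈ Finset.Ioi j, (v j - v k)
      = (-1 : ℂ) ^ (∑ j : Fin n, (Finset.Ioi j).card) * (Matrix.vandermonde v).det := by
  rw [Matrix.det_vandermonde, ← Finset.prod_pow_eq_pow_sum, ← Finset.prod_mul_distrib]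
  refine Finset.prod_congr rfl fun j _ => ?_
  rw [← Finset.prod_const, ← Finset.prod_mul_distrib]
  exact Finset.prod_congr rfl fun k _ => by ring

lemma perm_prod_sub (τ : Equiv.Perm (Fin n)) (v : Fin n → ℂ) :
    ∏ j, ∏ k ∈ Finset.Ioi j, (v (τ j) - v (τ k))
      = ((Equiv.Perm.sign τ : ℤ) : ℂ) * ∏ j, ∏ k ∈ Finset.Ioi j, (v j - v k) := by
  have h1 := prod_sub_eq (v ∘ ⇑τ)
  have h2 : Matrix.vandermonde (v ∘ ⇑τ) = (Matrix.vandermonde v).submatrix ⇑τ id := by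
    ext i j; simp [Matrix.vandermonde]
  rw [h2, Matrix.det_permute] at h1
  have h3 : (∏ j, ∏ k ∈ Finset.Ioi j, (v (τ j) - v (τ k)))
      = ∏ j, ∏ k ∈ Finset.Ioi j, ((v ∘ ⇑τ) j - (v ∘ ⇑τ) k) := rfl
  rw [h3, h1, prod_sub_eq v]
  ring

lemma rename_Vl_L (τ : Equiv.Perm (Fin n)) :
    rename (Sum.map ⇑τ id) (Vl n)
      = ((Equiv.Perm.sign τ : ℤ) : MvPolynomial (Fin n ⊕ Fin n) ℂ) * Vl n := by
  apply MvPolynomial.funext; intro x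
  rw [eval_rename, map_mul]
  simp only [Vl, map_prod, map_sub, eval_X, Function.comp_apply, Sum.map_inl, id_eq]
  rw [perm_prod_sub τ (fun i => x (Sum.inl i)), map_intCast]

lemma rename_Vw_R (τ : Equiv.Perm (Fin n)) :
    rename (Sum.map id ⇑τ) (Vw n)
      = ((Equiv.Perm.sign τ : ℤ) : MvPolynomial (Fin n ⊕ Fin n) ℂ) * Vw n := by
  apply MvPolynomial.funext; intro x
  rw [eval_rename, map_mul]
  simp only [Vw, map_prod, map_sub, eval_X, Function.comp_apply, Sum.map_inr, id_eq]
  rw [perm_prod_sub τ (fun i => x (Sum.inr i)), map_intCast]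

lemma rename_Vl_R (τ : Equiv.Perm (Fin n)) : rename (Sum.map id ⇑τ) (Vl n) = Vl n := by
  apply MvPolynomial.funext; intro x
  rw [eval_rename]
  simp [Vl]

lemma rename_Vw_L (τ : Equiv.Perm (Fin n)) : rename (Sum.map ⇑τ id) (Vw n) = Vw n := by
  apply MvPolynomial.funext; intro x
  rw [eval_rename]
  simp [Vw]

end DetProofAux2

open MvPolynomial Finset

namespace DetProofAux3

variable {n : ℕ}

lemma claimA (τ : Equiv.Perm (Fin n)) (q : MvPolynomial (Fin n ⊕ Fin n) ℂ) :
    sumToIter ℂ (Fin n) (Fin n) (rename (Sum.map ⇑τ id) q)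
      = rename ⇑τ (sumToIter ℂ (Fin n) (Fin n) q) := by
  have h : ((rename ⇑τ : MvPolynomial (Fin n) (MvPolynomial (Fin n) ℂ)
        →ₐ[MvPolynomial (Fin n) ℂ] MvPolynomial (Fin n) (MvPolynomial (Fin n) ℂ)) :
        MvPolynomial (Fin n) (MvPolynomial (Fin n) ℂ) →+* _).comp
          (sumToIter ℂ (Fin n) (Fin n))
      = (sumToIter ℂ (Fin n) (Fin n)).comp
        ((rename (Sum.map (⇑τ) (id : Fin n → Fin n)) : MvPolynomial (Fin n ⊕ Fin n) ℂ
          →ₐ[ℂ] MvPolynomial (Fin n ⊕ Fin n) ℂ) : _ →+* _) := by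
    apply MvPolynomial.ringHom_ext
    · intro r
      simp [sumToIter_C]
    · rintro (i | m) <;>
        simp [sumToIter_Xl, sumToIter_Xr]
  exact (DFunLike.congr_fun h q).symm

lemma claimB (τ : Equiv.Perm (Fin n)) (q : MvPolynomial (Fin n ⊕ Fin n) ℂ) :
    sumToIter ℂ (Fin n) (Fin n) (rename (Sum.map (id : Fin n → Fin n) ⇑τ) q)
      = map ((rename ⇑τ : MvPolynomial (Fin n) ℂ →ₐ[ℂ] MvPolynomial (Fin n) ℂ) :
          MvPolynomial (Fin n) ℂ →+* MvPolynomial (Fin n) ℂ)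
        (sumToIter ℂ (Fin n) (Fin n) q) := by
  have h : (map ((rename ⇑τ : MvPolynomial (Fin n) ℂ →ₐ[ℂ] MvPolynomial (Fin n) ℂ) :
          MvPolynomial (Fin n) ℂ →+* MvPolynomial (Fin n) ℂ)).comp
          (sumToIter ℂ (Fin n) (Fin n))
      = (sumToIter ℂ (Fin n) (Fin n)).comp
        ((rename (Sum.map (id : Fin n → Fin n) ⇑τ) : MvPolynomial (Fin n ⊕ Fin n) ℂ
          →ₐ[ℂ] MvPolynomial (Fin n ⊕ Fin n) ℂ) : _ →+* _) := by
    apply MvPolynomial.ringHom_ext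
    · intro r
      simp [sumToIter_C]
    · rintro (i | m) <;>
        simp [sumToIter_Xl, sumToIter_Xr]
  exact (DFunLike.congr_fun h q).symm

lemma iterToSum_sumToIter (q : MvPolynomial (Fin n ⊕ Fin n) ℂ) :
    iterToSum ℂ (Fin n) (Fin n) (sumToIter ℂ (Fin n) (Fin n) q) = q := by
  have h : (iterToSum ℂ (Fin n) (Fin n)).comp (sumToIter ℂ (Fin n) (Fin n))
      = RingHom.id _ := by
    apply MvPolynomial.ringHom_ext
    · intro r
      simp [sumToIter_C, iterToSum_C_C]
    · rintro (i | m) <;>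
        simp [sumToIter_Xl, sumToIter_Xr, iterToSum_X, iterToSum_C_X]
  exact DFunLike.congr_fun h q

lemma iterToSum_C_eq (a : MvPolynomial (Fin n) ℂ) :
    iterToSum ℂ (Fin n) (Fin n) (C a) = rename Sum.inr a := by
  have h : (iterToSum ℂ (Fin n) (Fin n)).comp (C : MvPolynomial (Fin n) ℂ →+*
        MvPolynomial (Fin n) (MvPolynomial (Fin n) ℂ))
      = ((rename (Sum.inr : Fin n → Fin n ⊕ Fin n) : MvPolynomial (Fin n) ℂ →ₐ[ℂ]
          MvPolynomial (Fin n ⊕ Fin n) ℂ) : _ →+* _) := by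
    apply MvPolynomial.ringHom_ext
    · intro r
      simp [iterToSum_C_C]
    · intro i
      simp [iterToSum_C_X]
  exact DFunLike.congr_fun h a

lemma iterToSum_esymm (k : ℕ) :
    iterToSum ℂ (Fin n) (Fin n) (esymm (Fin n) (MvPolynomial (Fin n) ℂ) k)
      = rename (Sum.inl : Fin n → Fin n ⊕ Fin n) (esymm (Fin n) ℂ k) := by
  simp [esymm, map_sum, map_prod, iterToSum_X]

lemma exists_rep (Q : MvPolynomial (Fin n ⊕ Fin n) ℂ)
    (h1 : ∀ τ : Equiv.Perm (Fin n), rename (Sum.map ⇑τ id) Q = Q)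
    (h2 : ∀ τ : Equiv.Perm (Fin n), rename (Sum.map id ⇑τ) Q = Q) :
    ∃ H : MvPolynomial (Fin n ⊕ Fin n) ℂ,
      aeval (Sum.elim (fun k : Fin n => rename Sum.inl (esymm (Fin n) ℂ (k.1 + 1)))
        (fun k : Fin n => rename Sum.inr (esymm (Fin n) ℂ (k.1 + 1)))) H = Q := by
  classical
  set Q' := sumToIter ℂ (Fin n) (Fin n) Q with hQ'def
  have hsym : Q'.IsSymmetric := fun τ => by
    rw [hQ'def, ← claimA τ Q, h1 τ]
  have hcard : Fintype.card (Fin n) ≤ n := le_of_eq (Fintype.card_fin n)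
  have hcard' : n ≤ Fintype.card (Fin n) := ge_of_eq (Fintype.card_fin n)
  obtain ⟨p, hp⟩ := esymmAlgHom_surjective (σ := Fin n) (n := n)
    (MvPolynomial (Fin n) ℂ) hcard ⟨Q', hsym⟩
  have hpv : aeval (fun i : Fin n => esymm (Fin n) (MvPolynomial (Fin n) ℂ) (i + 1)) p = Q' := by
    have h := congrArg Subtype.val hp
    rwa [esymmAlgHom_apply] at h
  -- all coefficients of `p` are symmetric
  have hcoeff : ∀ d, (coeff d p).IsSymmetric := by
    intro d τ
    have hmap : map ((rename ⇑τ : MvPolynomial (Fin n) ℂ →ₐ[ℂ] MvPolynomial (Fin n) ℂ) :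
        MvPolynomial (Fin n) ℂ →+* MvPolynomial (Fin n) ℂ) Q' = Q' := by
      rw [hQ'def, ← claimB τ Q, h2 τ]
    have heq : aeval (fun i : Fin n => esymm (Fin n) (MvPolynomial (Fin n) ℂ) (i + 1))
        (map ((rename ⇑τ : MvPolynomial (Fin n) ℂ →ₐ[ℂ] MvPolynomial (Fin n) ℂ) :
          MvPolynomial (Fin n) ℂ →+* MvPolynomial (Fin n) ℂ) p)
        = Q' := by
      rw [aeval_def, eval₂_map, ← hmap, ← hpv, aeval_def]
      rw [eval₂_comp_left (map ((rename ⇑τ : MvPolynomial (Fin n) ℂ →ₐ[ℂ]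
        MvPolynomial (Fin n) ℂ) : MvPolynomial (Fin n) ℂ →+* MvPolynomial (Fin n) ℂ))]
      congr 1
      · apply MvPolynomial.ringHom_ext
        · intro c
          simp [algebraMap_eq]
        · intro i
          simp [algebraMap_eq]
      · funext i
        simp only [Function.comp_apply, algebraMap_eq]
        rw [map_esymm]
    have hppp : map ((rename ⇑τ : MvPolynomial (Fin n) ℂ →ₐ[ℂ] MvPolynomial (Fin n) ℂ) :
        MvPolynomial (Fin n) ℂ →+* MvPolynomial (Fin n) ℂ) p = p := by
      apply esymmAlgHom_injective (σ := Fin n) (n := n) (MvPolynomial (Fin n) ℂ) hcard'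
      apply Subtype.ext
      rw [esymmAlgHom_apply, esymmAlgHom_apply, heq, hpv]
    have hc := congrArg (coeff d) hppp
    rw [coeff_map] at hc
    exact hc
  -- lift of symmetric polynomials
  have hsurj := esymmAlgHom_surjective (σ := Fin n) (n := n) ℂ hcard
  set q : MvPolynomial (Fin n) ℂ → MvPolynomial (Fin n) ℂ :=
    fun a => if h : a.IsSymmetric then Function.surjInv hsurj ⟨a, h⟩ else 0 with hqdef
  have hq : ∀ a : MvPolynomial (Fin n) ℂ, a.IsSymmetric →
      aeval (fun i : Fin n => esymm (Fin n) ℂ (i + 1)) (q a) = a := by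
    intro a h
    have h1' : q a = Function.surjInv hsurj ⟨a, h⟩ := by rw [hqdef]; simp [dif_pos h]
    have h2' := Function.surjInv_eq hsurj ⟨a, h⟩
    have h3' := congrArg Subtype.val h2'
    rw [esymmAlgHom_apply] at h3'
    rw [h1', h3']
  refine ⟨∑ d ∈ p.support, rename Sum.inr (q (coeff d p))
    * ∏ i : Fin n, X (Sum.inl i) ^ d i, ?_⟩
  set G : Fin n ⊕ Fin n → MvPolynomial (Fin n ⊕ Fin n) ℂ :=
    Sum.elim (fun k : Fin n => rename Sum.inl (esymm (Fin n) ℂ (k.1 + 1)))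
      (fun k : Fin n => rename Sum.inr (esymm (Fin n) ℂ (k.1 + 1))) with hGdef
  have hQrw : Q = ∑ d ∈ p.support, rename Sum.inr (coeff d p)
      * ∏ i : Fin n, (rename (Sum.inl : Fin n → Fin n ⊕ Fin n) (esymm (Fin n) ℂ (i + 1))) ^ d i := by
    rw [← iterToSum_sumToIter Q, ← hQ'def, ← hpv, aeval_def, algebraMap_eq]
    rw [eval₂_comp_left (iterToSum ℂ (Fin n) (Fin n))]
    rw [eval₂_eq']
    refine Finset.sum_congr rfl fun d _ => ?_
    rw [RingHom.comp_apply, iterToSum_C_eq]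
    congr 1
    refine Finset.prod_congr rfl fun i _ => ?_
    rw [Function.comp_apply, iterToSum_esymm]
  rw [hQrw, map_sum]
  refine Finset.sum_congr rfl fun d hd => ?_
  rw [map_mul, map_prod]
  congr 1
  · rw [aeval_rename]
    have hcomp : G ∘ (Sum.inr : Fin n → Fin n ⊕ Fin n)
        = fun k : Fin n => rename (Sum.inr : Fin n → Fin n ⊕ Fin n) (esymm (Fin n) ℂ (k + 1)) := by
      funext k; simp [hGdef]
    rw [hcomp]
    have : aeval (fun k : Fin n => rename (Sum.inr : Fin n → Fin n ⊕ Fin n)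
        (esymm (Fin n) ℂ (k + 1))) (q (coeff d p))
        = rename (Sum.inr : Fin n → Fin n ⊕ Fin n)
            (aeval (fun i : Fin n => esymm (Fin n) ℂ (i + 1)) (q (coeff d p))) := by
      rw [comp_aeval_apply]
    rw [this, hq _ (hcoeff d)]
  · refine Finset.prod_congr rfl fun i _ => ?_
    rw [map_pow, aeval_X]
    simp [hGdef]

end DetProofAux3


open Finset in
/-- There is a polynomial `H₁` in `2n` variables such that, wherever all
`1 − λ_j w_k ≠ 0`,
`det[(1 − λ_j w_k)⁻²] · ∏_{i,j}(1 − λᵢ w_j)²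
  = H₁(π_n(λ), π_n(w)) · ∏_{j<k}(λ_j − λ_k) · ∏_{j<k}(w_j − w_k)`. -/
theorem exists_poly_det_mul_prod_factor (n : ℕ) :
    ∃ H₁ : MvPolynomial (Fin n ⊕ Fin n) ℂ,
      ∀ lam w : Fin n → ℂ, (∀ j k : Fin n, 1 - lam j * w k ≠ 0) →
        Matrix.det (Matrix.of fun j k : Fin n => ((1 - lam j * w k) ^ 2)⁻¹)
            * ∏ i : Fin n, ∏ j : Fin n, (1 - lam i * w j) ^ 2
          = eval (Sum.elim (symmMap n lam) (symmMap n w)) H₁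
            * (∏ j : Fin n, ∏ k ∈ Finset.Ioi j, (lam j - lam k))
            * (∏ j : Fin n, ∏ k ∈ Finset.Ioi j, (w j - w k)) := by
  classical
  open DetProofAux DetProofAux2 DetProofAux3 in
  have main : True := trivial
  -- abbreviations
  have hsign : ∀ j k : Fin n, j ≠ k →
      ((Equiv.Perm.sign (Equiv.swap j k) : ℤ) : MvPolynomial (Fin n ⊕ Fin n) ℂ) = -1 := by
    intro j k h
    rw [Equiv.Perm.sign_swap h]
    simp
  have hswapL : ∀ j k : Fin n, j ≠ k →
      ⇑(Equiv.swap (Sum.inl j : Fin n ⊕ Fin n) (Sum.inl k))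
        = Sum.map (⇑(Equiv.swap j k)) (id : Fin n → Fin n) := by
    intro j k hjk
    funext v
    rcases v with i | m
    · simp only [Sum.map_inl, Equiv.swap_apply_def]
      split_ifs with h1 h2 <;> simp_all
    · rw [Equiv.swap_apply_of_ne_of_ne (by simp) (by simp)]
      simp
  have hswapR : ∀ j k : Fin n, j ≠ k →
      ⇑(Equiv.swap (Sum.inr j : Fin n ⊕ Fin n) (Sum.inr k))
        = Sum.map (id : Fin n → Fin n) (⇑(Equiv.swap j k)) := by
    intro j k hjk
    funext v
    rcases v with i | m
    · rw [Equiv.swap_apply_of_ne_of_ne (by simp) (by simp)]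
      simp
    · simp only [Sum.map_inr, Equiv.swap_apply_def]
      split_ifs with h1 h2 <;> simp_all
  have hdvdL : ∀ j k : Fin n, j < k →
      (X (Sum.inl j) - X (Sum.inl k)) ∣ (DetProofAux2.NP n).det := by
    intro j k hjk
    apply DetProofAux.dvd_of_swap_neg (by simp [hjk.ne])
    rw [hswapL j k hjk.ne, DetProofAux2.rename_NP_L, hsign j k hjk.ne, neg_one_mul]
  have hdvdR : ∀ j k : Fin n, j < k →
      (X (Sum.inr j) - X (Sum.inr k)) ∣ (DetProofAux2.NP n).det := by
    intro j k hjk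
    apply DetProofAux.dvd_of_swap_neg (by simp [hjk.ne])
    rw [hswapR j k hjk.ne, DetProofAux2.rename_NP_R, hsign j k hjk.ne, neg_one_mul]
  -- the Vandermonde factors as one finset product
  set emb : Bool → Fin n → Fin n ⊕ Fin n := fun b i => bif b then Sum.inl i else Sum.inr i
    with hembdef
  have hemb : ∀ b b' (i i' : Fin n), emb b i = emb b' i' ↔ (b = b' ∧ i = i') := by
    intro b b' i i'
    cases b <;> cases b' <;> simp [hembdef]
  set s : Finset (Bool × Fin n × Fin n) := Finset.univ.filter (fun t => t.2.1 < t.2.2) with hsdef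
  set pf : Bool × Fin n × Fin n → MvPolynomial (Fin n ⊕ Fin n) ℂ :=
    fun t => X (emb t.1 t.2.1) - X (emb t.1 t.2.2) with hpfdef
  have hpair : ∀ (g : Fin n → Fin n → MvPolynomial (Fin n ⊕ Fin n) ℂ),
      (∏ p : Fin n × Fin n, if p.1 < p.2 then g p.1 p.2 else 1)
        = ∏ j, ∏ k ∈ Finset.Ioi j, g j k := by
    intro g
    rw [Fintype.prod_prod_type]
    refine Finset.prod_congr rfl fun j _ => ?_
    rw [← Finset.prod_filter]
    refine Finset.prod_congr ?_ fun k _ => rfl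
    ext k
    simp
  have hprod : ∏ t ∈ s, pf t = DetProofAux2.Vl n * DetProofAux2.Vw n := by
    rw [hsdef, Finset.prod_filter, Fintype.prod_prod_type, Fintype.prod_bool]
    rw [hpair (fun j k => pf (true, j, k)), hpair (fun j k => pf (false, j, k))]
    rfl
  have hVdvd : (DetProofAux2.Vl n * DetProofAux2.Vw n) ∣ (DetProofAux2.NP n).det := by
    rw [← hprod]
    apply DetProofAux.prod_primes_dvd'
    · rintro ⟨b, j, k⟩ ht
      rw [hsdef, Finset.mem_filter] at ht
      exact DetProofAux.prime_X_sub_X (by rw [Ne, hemb]; exact fun h => ht.2.ne' h.2)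
    · rintro ⟨b, j, k⟩ ht ⟨b', j', k'⟩ ht' htt'
      rw [hsdef, Finset.mem_filter] at ht ht'
      apply DetProofAux.not_assoc
      · rw [Ne, hemb]; exact fun h => ht.2.ne h.2
      · rw [Ne, hemb]; exact fun h => ht'.2.ne h.2
      · rintro ⟨h1, h2⟩
        rw [hemb] at h1 h2
        exact htt' (Prod.ext h1.1 (Prod.ext h1.2 h2.2))
      · rintro ⟨h1, h2⟩
        rw [hemb] at h1 h2
        exact absurd (h1.2 ▸ h2.2 ▸ ht.2) (lt_asymm ht'.2)
    · rintro ⟨b, j, k⟩ ht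
      rw [hsdef, Finset.mem_filter] at ht
      cases b
      · exact hdvdR j k ht.2
      · exact hdvdL j k ht.2
  obtain ⟨Qp, hQp⟩ := hVdvd
  have hVne : (DetProofAux2.Vl n * DetProofAux2.Vw n : MvPolynomial (Fin n ⊕ Fin n) ℂ) ≠ 0 := by
    have hfac : ∀ (f : Fin n → Fin n ⊕ Fin n), Function.Injective f →
        (∏ j, ∏ k ∈ Finset.Ioi j, (X (f j) - X (f k)) : MvPolynomial (Fin n ⊕ Fin n) ℂ) ≠ 0 := by
      intro f hf
      rw [Finset.prod_ne_zero_iff]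
      intro j _
      rw [Finset.prod_ne_zero_iff]
      intro k hk
      exact (DetProofAux.prime_X_sub_X
        (fun h => (Finset.mem_Ioi.mp hk).ne' (hf h))).ne_zero
    exact mul_ne_zero (hfac Sum.inl Sum.inl_injective) (hfac Sum.inr Sum.inr_injective)
  have hcancel : ∀ (ε : MvPolynomial (Fin n ⊕ Fin n) ℂ), ε ≠ 0 →
      ∀ R : MvPolynomial (Fin n ⊕ Fin n) ℂ,
      ε * (DetProofAux2.NP n).det = ε * DetProofAux2.Vl n * DetProofAux2.Vw n * R →
      R = Qp := by
    intro ε hε R h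
    rw [hQp] at h
    have h2 : (DetProofAux2.Vl n * DetProofAux2.Vw n) * R
        = (DetProofAux2.Vl n * DetProofAux2.Vw n) * Qp := by
      apply mul_left_cancel₀ hε
      linear_combination -h
    exact mul_left_cancel₀ hVne h2
  have hεne : ∀ τ : Equiv.Perm (Fin n),
      ((Equiv.Perm.sign τ : ℤ) : MvPolynomial (Fin n ⊕ Fin n) ℂ) ≠ 0 := by
    intro τ
    rcases Int.units_eq_one_or (Equiv.Perm.sign τ) with h' | h' <;> rw [h'] <;> simp
  have hQsymL : ∀ τ : Equiv.Perm (Fin n), rename (Sum.map (⇑τ) id) Qp = Qp := by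
    intro τ
    have h := congrArg (rename (Sum.map (⇑τ) (id : Fin n → Fin n))) hQp
    rw [DetProofAux2.rename_NP_L, map_mul, map_mul, DetProofAux2.rename_Vl_L,
      DetProofAux2.rename_Vw_L] at h
    apply hcancel _ (hεne τ)
    linear_combination h
  have hQsymR : ∀ τ : Equiv.Perm (Fin n), rename (Sum.map id (⇑τ)) Qp = Qp := by
    intro τ
    have h := congrArg (rename (Sum.map (id : Fin n → Fin n) (⇑τ))) hQp
    rw [DetProofAux2.rename_NP_R, map_mul, map_mul, DetProofAux2.rename_Vl_R,
      DetProofAux2.rename_Vw_R] at h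
    apply hcancel _ (hεne τ)
    linear_combination h
  obtain ⟨H₁, hH⟩ := DetProofAux3.exists_rep Qp hQsymL hQsymR
  refine ⟨H₁, ?_⟩
  intro lam w hnz
  have e1 := DetProofAux2.eval_Pdet lam w hnz
  have e2 : eval (Sum.elim lam w) (DetProofAux2.Vl n)
      = ∏ j, ∏ k ∈ Finset.Ioi j, (lam j - lam k) := by
    simp [DetProofAux2.Vl]
  have e3 : eval (Sum.elim lam w) (DetProofAux2.Vw n)
      = ∏ j, ∏ k ∈ Finset.Ioi j, (w j - w k) := by
    simp [DetProofAux2.Vw]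
  have e4 : eval (Sum.elim lam w) Qp = eval (Sum.elim (symmMap n lam) (symmMap n w)) H₁ := by
    have hC : (eval (Sum.elim lam w)).comp (C : ℂ →+* MvPolynomial (Fin n ⊕ Fin n) ℂ)
        = RingHom.id ℂ := by
      ext r
      simp
    rw [← hH, aeval_def, algebraMap_eq, eval₂_comp_left (eval (Sum.elim lam w)), hC, eval₂_id]
    have hfun : (⇑(eval (Sum.elim lam w)) ∘
          Sum.elim (fun k : Fin n => rename Sum.inl (esymm (Fin n) ℂ (k.1 + 1)))
            fun k : Fin n => rename Sum.inr (esymm (Fin n) ℂ (k.1 + 1)))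
        = Sum.elim (symmMap n lam) (symmMap n w) := by
      funext v
      rcases v with k | k
      · simp only [Function.comp_apply, Sum.elim_inl]
        rw [eval_rename]
        have hl : (Sum.elim lam w ∘ Sum.inl) = lam := rfl
        rw [hl]
        simp [symmMap, esymm, map_sum, map_prod]
      · simp only [Function.comp_apply, Sum.elim_inr]
        rw [eval_rename]
        have hr : (Sum.elim lam w ∘ Sum.inr) = w := rfl
        rw [hr]
        simp [symmMap, esymm, map_sum, map_prod]
    rw [hfun]
  rw [← e1, hQp, map_mul, map_mul, e2, e3, e4]
  ring
end

section
/- Let P be a polynomial in the 2n complex variables (λ_1, …, λ_n, w_1, …, w_n) and set V(λ) = ∏_{1≤j<k≤n}(λ_j − λ_k). If there exists a continuous function Φ on 𝔻^n × 𝔻^n such that P(λ, w) = Φ(λ, w) · V(λ) · V(w) for all (λ, w) ∈ 𝔻^n × 𝔻^n, then V(λ)·V(w) divides P in the polynomial ring in 2n variables over ℂ. -/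
open MvPolynomial

/-- The Vandermonde product `V(λ) = ∏_{j<k} (λ_j − λ_k)`. -/
def vandermondeProd (n : ℕ) (lam : Fin n → ℂ) : ℂ :=
  ∏ j : Fin n, ∏ k ∈ Finset.Ioi j, (lam j - lam k)

/-- The Vandermonde product in the first `n` of `2n` polynomial variables. -/
noncomputable def vandermondePolyL (n : ℕ) : MvPolynomial (Fin n ⊕ Fin n) ℂ :=
  ∏ j : Fin n, ∏ k ∈ Finset.Ioi j, (X (Sum.inl j) - X (Sum.inl k))

/-- The Vandermonde product in the last `n` of `2n` polynomial variables. -/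
noncomputable def vandermondePolyR (n : ℕ) : MvPolynomial (Fin n ⊕ Fin n) ℂ :=
  ∏ j : Fin n, ∏ k ∈ Finset.Ioi j, (X (Sum.inr j) - X (Sum.inr k))

section Aux

variable {σ : Type*} [DecidableEq σ]

/-- `X u - X v` divides `p - p[X u := X v]`. -/
lemma dvd_sub_subst (u v : σ) (p : MvPolynomial σ ℂ) :
    (X u - X v) ∣ p - aeval (Function.update (X : σ → MvPolynomial σ ℂ) u (X v)) p := by
  induction p using MvPolynomial.induction_on with
  | C a => simp
  | add p q hp hq =>
    have h := dvd_add hp hq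
    convert h using 1
    simp only [map_add]; ring
  | mul_X p i hp =>
    have h2 : (X u - X v) ∣
        aeval (Function.update (X : σ → MvPolynomial σ ℂ) u (X v)) p *
          (X i - Function.update (X : σ → MvPolynomial σ ℂ) u (X v) i) := by
      rcases eq_or_ne i u with rfl | h
      · rw [Function.update_self]
        exact Dvd.intro_left _ rfl
      · rw [Function.update_of_ne h]
        simp
    have h := dvd_add (hp.mul_right (X i)) h2
    convert h using 1
    simp only [map_mul, aeval_X]
    ring

lemma sub_X_dvd_iff (u v : σ) (huv : u ≠ v) (p : MvPolynomial σ ℂ) :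
    (X u - X v) ∣ p ↔ aeval (Function.update (X : σ → MvPolynomial σ ℂ) u (X v)) p = 0 := by
  constructor
  · rintro ⟨q, rfl⟩
    rw [map_mul, map_sub, aeval_X, aeval_X, Function.update_self,
      Function.update_of_ne (Ne.symm huv), sub_self, zero_mul]
  · intro h
    have h2 := dvd_sub_subst u v p
    rwa [h, sub_zero] at h2

lemma X_sub_X_ne_zero (u v : σ) (h : u ≠ v) : (X u - X v : MvPolynomial σ ℂ) ≠ 0 :=
  sub_ne_zero.mpr fun he => h (X_injective he)

lemma prime_X_sub_X (u v : σ) (h : u ≠ v) : Prime (X u - X v : MvPolynomial σ ℂ) := by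
  refine ⟨X_sub_X_ne_zero u v h, ?_, ?_⟩
  · intro hu
    have h0 : aeval (Function.update (X : σ → MvPolynomial σ ℂ) u (X v))
        (X u - X v : MvPolynomial σ ℂ) = 0 := by
      rw [map_sub, aeval_X, aeval_X, Function.update_self,
        Function.update_of_ne (Ne.symm h), sub_self]
    have := hu.map (aeval (Function.update (X : σ → MvPolynomial σ ℂ) u (X v)))
    rw [h0] at this
    exact not_isUnit_zero this
  · intro a b hab
    rw [sub_X_dvd_iff u v h, map_mul] at hab
    rcases mul_eq_zero.mp hab with h' | h'
    · exact Or.inl ((sub_X_dvd_iff u v h a).mpr h')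
    · exact Or.inr ((sub_X_dvd_iff u v h b).mpr h')

lemma not_dvd_X_sub_X {u v c d : σ} (huv : u ≠ v) (hcd : c ≠ d)
    (h1 : (u, v) ≠ (c, d)) (h2 : (v, u) ≠ (c, d)) :
    ¬ (X u - X v : MvPolynomial σ ℂ) ∣ (X c - X d) := by
  rw [sub_X_dvd_iff u v huv, map_sub, aeval_X, aeval_X]
  intro hz
  rw [sub_eq_zero] at hz
  by_cases hc : c = u <;> by_cases hd : d = u
  · exact hcd (hc.trans hd.symm)
  · subst hc
    rw [Function.update_self, Function.update_of_ne hd] at hz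
    exact h1 (by rw [X_injective hz])
  · subst hd
    rw [Function.update_self, Function.update_of_ne hc] at hz
    exact h2 (by rw [X_injective hz.symm])
  · rw [Function.update_of_ne hc, Function.update_of_ne hd] at hz
    exact hcd (X_injective hz)

lemma prod_primes_dvd' {α : Type*} [CommMonoidWithZero α] [IsCancelMulZero α] {ι : Type*}
    (s : Finset ι) (f : ι → α) (hp : ∀ i ∈ s, Prime (f i))
    (hnd : ∀ i ∈ s, ∀ j ∈ s, i ≠ j → ¬ f i ∣ f j) {a : α}
    (hd : ∀ i ∈ s, f i ∣ a) : (∏ i ∈ s, f i) ∣ a := by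
  induction s using Finset.cons_induction generalizing a with
  | empty => simpa using one_dvd a
  | cons i s his ih =>
    rw [Finset.prod_cons]
    obtain ⟨m, rfl⟩ := hd i (Finset.mem_cons_self i s)
    refine mul_dvd_mul_left _ (ih ?_ ?_ ?_)
    · exact fun j hj => hp j (Finset.mem_cons.mpr (Or.inr hj))
    · exact fun j hj k hk hjk =>
        hnd j (Finset.mem_cons.mpr (Or.inr hj)) k (Finset.mem_cons.mpr (Or.inr hk)) hjk
    · intro j hj
      have hj' : j ∈ Finset.cons i s his := Finset.mem_cons.mpr (Or.inr hj)
      have hdj := hd j hj'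
      rcases (hp j hj').2.2 _ _ hdj with h | h
      · exact absurd h (hnd j hj' i (Finset.mem_cons_self i s)
          (fun he => his (he ▸ hj)))
      · exact h

lemma eval_aeval' {τ : Type*} (z : τ → ℂ) (f : σ → MvPolynomial τ ℂ)
    (p : MvPolynomial σ ℂ) :
    eval z (aeval f p) = eval (fun i => eval z (f i)) p := by
  induction p using MvPolynomial.induction_on with
  | C a => simp
  | add p q hp hq => simp only [map_add, hp, hq]
  | mul_X p i hp => simp only [map_mul, aeval_X, eval_X, hp]

end Aux

lemma vandermondeProd_eq_zero {n : ℕ} (lam : Fin n → ℂ) {j k : Fin n} (hjk : j < k)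
    (h : lam j = lam k) : vandermondeProd n lam = 0 := by
  apply Finset.prod_eq_zero (Finset.mem_univ j)
  apply Finset.prod_eq_zero (Finset.mem_Ioi.mpr hjk)
  rw [h, sub_self]

lemma mvPolynomial_eq_zero_of_eval_zero_ball {m : Type*} [Fintype m]
    (p : MvPolynomial m ℂ) (h : ∀ z : m → ℂ, (∀ i, ‖z i‖ < 1) → eval z p = 0) :
    p = 0 := by
  have hA : AnalyticOnNhd ℂ (fun z : m → ℂ => eval z p) Set.univ := by
    simpa using AnalyticOnNhd.eval_continuousLinearMap (ContinuousLinearMap.id ℂ (m → ℂ)) p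
  have hz : (fun z : m → ℂ => eval z p) =ᶠ[nhds 0] 0 := by
    filter_upwards [Metric.ball_mem_nhds (0 : m → ℂ) one_pos] with z hzb
    refine h z fun i => ?_
    calc ‖z i‖ ≤ ‖z‖ := norm_le_pi_norm z i
    _ < 1 := by simpa [dist_zero_right] using hzb
  have hEq := hA.eqOn_zero_of_preconnected_of_eventuallyEq_zero isPreconnected_univ
    (Set.mem_univ 0) hz
  apply MvPolynomial.funext
  intro x
  simpa using hEq (Set.mem_univ x)

/-- If a polynomial `P(λ, w)` in `2n` variables factors on `𝔻^n × 𝔻^n` as a continuous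
function times `V(λ)·V(w)`, then `V(λ)·V(w)` divides `P` in the polynomial ring. -/
theorem vandermonde_dvd_of_continuous_factor (n : ℕ)
    (P : MvPolynomial (Fin n ⊕ Fin n) ℂ)
    (Φ : (Fin n → ℂ) × (Fin n → ℂ) → ℂ)
    (hΦ : ContinuousOn Φ (polydisc n ×ˢ polydisc n))
    (hfac : ∀ lam ∈ polydisc n, ∀ w ∈ polydisc n,
      eval (Sum.elim lam w) P = Φ (lam, w) * vandermondeProd n lam * vandermondeProd n w) :
    vandermondePolyL n * vandermondePolyR n ∣ P := by
  classical
  -- Key: each linear factor divides P.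
  have key : ∀ u v : Fin n ⊕ Fin n, u ≠ v →
      (∀ z : Fin n ⊕ Fin n → ℂ, (∀ i, ‖z i‖ < 1) →
        eval (Function.update z u (z v)) P = 0) →
      (X u - X v : MvPolynomial (Fin n ⊕ Fin n) ℂ) ∣ P := by
    intro u v huv hvan
    rw [sub_X_dvd_iff u v huv]
    apply mvPolynomial_eq_zero_of_eval_zero_ball
    intro z hz
    rw [eval_aeval']
    have hfun : (fun i => eval z (Function.update X u (X v) i)) =
        Function.update z u (z v) := by
      funext i
      rcases eq_or_ne i u with rfl | hi
      · rw [Function.update_self, Function.update_self, eval_X]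
      · rw [Function.update_of_ne hi, Function.update_of_ne hi, eval_X]
    rw [hfun]
    exact hvan z hz
  -- evaluation at updated points lands in the polydisc and kills a Vandermonde factor
  have hupd : ∀ (z : Fin n ⊕ Fin n → ℂ), (∀ i, ‖z i‖ < 1) →
      ∀ u v : Fin n ⊕ Fin n, ∀ i, ‖Function.update z u (z v) i‖ < 1 := by
    intro z hz u v i
    rcases eq_or_ne i u with rfl | hi
    · rw [Function.update_self]; exact hz v
    · rw [Function.update_of_ne hi]; exact hz i
  have keyL : ∀ j k : Fin n, j < k →
      (X (Sum.inl j) - X (Sum.inl k) : MvPolynomial (Fin n ⊕ Fin n) ℂ) ∣ P := by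
    intro j k hjk
    refine key _ _ (by simp [hjk.ne]) ?_
    intro z hz
    set z' := Function.update z (Sum.inl j) (z (Sum.inl k)) with hz'
    have hzel : Sum.elim (fun i => z' (Sum.inl i)) (fun i => z' (Sum.inr i)) = z' := by
      funext i; rcases i with i | i <;> rfl
    have hlam : (fun i => z' (Sum.inl i)) ∈ polydisc n := fun i =>
      hupd z hz (Sum.inl j) (Sum.inl k) (Sum.inl i)
    have hw : (fun i => z' (Sum.inr i)) ∈ polydisc n := fun i =>
      hupd z hz (Sum.inl j) (Sum.inl k) (Sum.inr i)
    have heq := hfac _ hlam _ hw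
    rw [hzel] at heq
    rw [heq]
    have hlamjk : z' (Sum.inl j) = z' (Sum.inl k) := by
      rw [hz', Function.update_self, Function.update_of_ne (by simp [hjk.ne'])]
    rw [vandermondeProd_eq_zero (fun i => z' (Sum.inl i)) hjk hlamjk]
    ring
  have keyR : ∀ j k : Fin n, j < k →
      (X (Sum.inr j) - X (Sum.inr k) : MvPolynomial (Fin n ⊕ Fin n) ℂ) ∣ P := by
    intro j k hjk
    refine key _ _ (by simp [hjk.ne]) ?_
    intro z hz
    set z' := Function.update z (Sum.inr j) (z (Sum.inr k)) with hz'
    have hzel : Sum.elim (fun i => z' (Sum.inl i)) (fun i => z' (Sum.inr i)) = z' := by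
      funext i; rcases i with i | i <;> rfl
    have hlam : (fun i => z' (Sum.inl i)) ∈ polydisc n := fun i =>
      hupd z hz (Sum.inr j) (Sum.inr k) (Sum.inl i)
    have hw : (fun i => z' (Sum.inr i)) ∈ polydisc n := fun i =>
      hupd z hz (Sum.inr j) (Sum.inr k) (Sum.inr i)
    have heq := hfac _ hlam _ hw
    rw [hzel] at heq
    rw [heq]
    have hwjk : z' (Sum.inr j) = z' (Sum.inr k) := by
      rw [hz', Function.update_self, Function.update_of_ne (by simp [hjk.ne'])]
    rw [vandermondeProd_eq_zero (fun i => z' (Sum.inr i)) hjk hwjk]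
    ring
  -- Reindex the product over a single finset of pairs.
  set pa : (Σ _ : Fin n, Fin n) ⊕ (Σ _ : Fin n, Fin n) → Fin n ⊕ Fin n :=
    Sum.elim (fun x => Sum.inl x.1) (fun x => Sum.inr x.1) with hpa
  set pb : (Σ _ : Fin n, Fin n) ⊕ (Σ _ : Fin n, Fin n) → Fin n ⊕ Fin n :=
    Sum.elim (fun x => Sum.inl x.2) (fun x => Sum.inr x.2) with hpb
  set s : Finset ((Σ _ : Fin n, Fin n) ⊕ (Σ _ : Fin n, Fin n)) :=
    (Finset.univ.sigma fun j => Finset.Ioi j).disjSum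
      (Finset.univ.sigma fun j => Finset.Ioi j) with hs
  have hmem : ∀ x ∈ s, (Sum.elim (fun y : Σ _ : Fin n, Fin n => y.1 < y.2)
      (fun y : Σ _ : Fin n, Fin n => y.1 < y.2)) x := by
    rintro (x | x) hx
    · simpa using (Finset.mem_sigma.mp ((Finset.inl_mem_disjSum).mp hx)).2
    · simpa using (Finset.mem_sigma.mp ((Finset.inr_mem_disjSum).mp hx)).2
  have hprod : vandermondePolyL n * vandermondePolyR n =
      ∏ x ∈ s, (X (pa x) - X (pb x)) := by
    rw [hs, Finset.prod_disjSum]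
    congr 1
    · rw [vandermondePolyL, Finset.prod_sigma]
      rfl
    · rw [vandermondePolyR, Finset.prod_sigma]
      rfl
  rw [hprod]
  refine prod_primes_dvd' s _ ?_ ?_ ?_
  · intro x hx
    refine prime_X_sub_X _ _ ?_
    rcases x with ⟨j, k⟩ | ⟨j, k⟩ <;> have := hmem _ hx <;>
      simp only [Sum.elim_inl, Sum.elim_inr] at this <;>
      simp [hpa, hpb, this.ne]
  · rintro x hx y hy hxy hdvd
    have hx' := hmem _ hx
    have hy' := hmem _ hy
    rcases x with ⟨j, k⟩ | ⟨j, k⟩ <;> rcases y with ⟨j', k'⟩ | ⟨j', k'⟩ <;>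
        simp only [Sum.elim_inl, Sum.elim_inr] at hx' hy' <;>
        simp only [hpa, hpb, Sum.elim_inl, Sum.elim_inr] at hdvd <;>
        refine not_dvd_X_sub_X ?_ ?_ ?_ ?_ hdvd
    · simp [hx'.ne]
    · simp [hy'.ne]
    · intro h
      injection h with h1 h2
      injection h1 with h1
      injection h2 with h2
      subst h1; subst h2
      exact hxy rfl
    · intro h
      injection h with h1 h2
      injection h1 with h1
      injection h2 with h2
      subst h1; subst h2
      exact absurd hy' (lt_asymm hx')
    · simp [hx'.ne]
    · simp [hy'.ne]
    · simp
    · simp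
    · simp [hx'.ne]
    · simp [hy'.ne]
    · simp
    · simp
    · simp [hx'.ne]
    · simp [hy'.ne]
    · intro h
      injection h with h1 h2
      injection h1 with h1
      injection h2 with h2
      subst h1; subst h2
      exact hxy rfl
    · intro h
      injection h with h1 h2
      injection h1 with h1
      injection h2 with h2
      subst h1; subst h2
      exact absurd hy' (lt_asymm hx')
  · intro x hx
    have hx' := hmem _ hx
    rcases x with ⟨j, k⟩ | ⟨j, k⟩ <;> simp only [Sum.elim_inl, Sum.elim_inr] at hx'
    · exact keyL j k hx'
    · exact keyR j k hx'
end

section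
/- There exist polynomials H_1 and H_2 in 2n complex variables, with H_2(ξ, conj(η)) ≠ 0 for all ξ, η ∈ 𝔾_n, such that for all λ, μ ∈ 𝔻^n each having pairwise distinct coordinates, det[(1 − λ_j · conj(μ_k))^{−2}]_{1≤j,k≤n} / (V(λ) · conj(V(μ))) = H_1(π_n(λ), conj(π_n(μ))) / H_2(π_n(λ), conj(π_n(μ))). (In particular, by the Edigarian–Zwonek formula, the Bergman kernel of the symmetrized polydisc 𝔾_n is a rational function.) -/
open MvPolynomial

lemma X_sub_X_dvd {V : Type*} [DecidableEq V] {a b : V} (hba : b ≠ a)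
    {P : MvPolynomial V ℂ} (h : aeval (Function.update (X : V → MvPolynomial V ℂ) a (X b)) P = 0) :
    (X a - X b : MvPolynomial V ℂ) ∣ P := by
  classical
  set W := {v : V // v ≠ a}
  let e : MvPolynomial V ℂ ≃ₐ[ℂ] Polynomial (MvPolynomial W ℂ) :=
    (renameEquiv ℂ (Equiv.optionSubtypeNe a).symm).trans (optionEquivLeft ℂ W)
  have hea : e (X a) = Polynomial.X := by
    simp [e, renameEquiv_apply, Equiv.optionSubtypeNe_symm_self, optionEquivLeft_X_none]
  have heb : e (X b) = Polynomial.C (X ⟨b, hba⟩) := by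
    simp [e, renameEquiv_apply, Equiv.optionSubtypeNe_symm_of_ne hba, optionEquivLeft_X_some]
  -- the composed ring hom identity
  have key : ∀ p : MvPolynomial V ℂ,
      rename (Subtype.val : W → V) (Polynomial.eval (X ⟨b, hba⟩) (e p))
        = aeval (Function.update (X : V → MvPolynomial V ℂ) a (X b)) p := by
    intro p
    have := MvPolynomial.ringHom_ext (R := ℂ) (σ := V)
      (f := ((rename (Subtype.val : W → V)).toRingHom.comp
        ((Polynomial.evalRingHom (X ⟨b, hba⟩ : MvPolynomial W ℂ)).comp e.toAlgHom.toRingHom)))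
      (g := (aeval (Function.update (X : V → MvPolynomial V ℂ) a (X b))).toRingHom)
      (by intro r; simp [e]) 
      (by
        intro v
        by_cases hv : v = a
        · subst hv
          simp [hea, Function.update_self]
        · have : e (X v) = Polynomial.C (X ⟨v, hv⟩) := by
            simp [e, renameEquiv_apply, Equiv.optionSubtypeNe_symm_of_ne hv,
              optionEquivLeft_X_some]
          simp [this, Function.update_of_ne hv])
    exact congrFun (congrArg DFunLike.coe this) p
  have h0 : Polynomial.eval (X ⟨b, hba⟩) (e P) = 0 := by
    have hinj := rename_injective (R := ℂ) (Subtype.val : W → V) Subtype.val_injective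
    apply hinj
    rw [key P, h, map_zero]
  have hdvd : (Polynomial.X - Polynomial.C (X ⟨b, hba⟩)) ∣ e P :=
    Polynomial.dvd_iff_isRoot.mpr h0
  obtain ⟨q, hq⟩ := hdvd
  refine ⟨e.symm q, ?_⟩
  apply e.injective
  rw [map_mul, map_sub, hea, heb, AlgEquiv.apply_symm_apply, hq]


lemma X_sub_X_prime {V : Type*} [DecidableEq V] {a b : V} (hba : b ≠ a) :
    Prime (X a - X b : MvPolynomial V ℂ) := by
  classical
  set W := {v : V // v ≠ a}
  let e : MvPolynomial V ℂ ≃ₐ[ℂ] Polynomial (MvPolynomial W ℂ) :=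
    (renameEquiv ℂ (Equiv.optionSubtypeNe a).symm).trans (optionEquivLeft ℂ W)
  have hea : e (X a) = Polynomial.X := by
    simp [e, renameEquiv_apply, Equiv.optionSubtypeNe_symm_self, optionEquivLeft_X_none]
  have heb : e (X b) = Polynomial.C (X ⟨b, hba⟩) := by
    simp [e, renameEquiv_apply, Equiv.optionSubtypeNe_symm_of_ne hba, optionEquivLeft_X_some]
  rw [← MulEquiv.prime_iff e.toMulEquiv]
  show Prime (e (X a - X b))
  rw [map_sub, hea, heb]
  exact Polynomial.prime_X_sub_C _

lemma X_sub_X_not_dvd {V : Type*} [DecidableEq V] {a b c d : V} (hab : a ≠ b) (hcd : c ≠ d)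
    (h1 : ¬(a = c ∧ b = d)) (h2 : ¬(a = d ∧ b = c)) :
    ¬ ((X c - X d : MvPolynomial V ℂ) ∣ X a - X b) := by
  classical
  rintro ⟨f, hf⟩
  have h0 := congrArg (aeval (Function.update (X : V → MvPolynomial V ℂ) c (X d))) hf
  rw [map_mul, map_sub, aeval_X, aeval_X, map_sub, aeval_X, aeval_X,
    Function.update_self] at h0
  have hzero : (Function.update (X : V → MvPolynomial V ℂ) c (X d) a)
      - Function.update (X : V → MvPolynomial V ℂ) c (X d) b = 0 := by
    rw [Function.update_of_ne (fun h => hcd h.symm : d ≠ c)] at h0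
    rw [h0]; simp
  by_cases hac : a = c <;> by_cases hbc : b = c
  · exact hab (hac.trans hbc.symm)
  · subst hac
    rw [Function.update_self, Function.update_of_ne hbc] at hzero
    have : d = b := by
      by_contra hdb
      exact hdb (X_injective (sub_eq_zero.mp hzero))
    exact h1 ⟨rfl, this.symm⟩
  · subst hbc
    rw [Function.update_self, Function.update_of_ne hac] at hzero
    have : a = d := X_injective (sub_eq_zero.mp hzero)
    exact h2 ⟨this, rfl⟩
  · rw [Function.update_of_ne hac, Function.update_of_ne hbc] at hzero
    exact hab (X_injective (sub_eq_zero.mp hzero))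


lemma prod_dvd_of_primes {α : Type*} [CommMonoidWithZero α] [IsCancelMulZero α] {ι : Type*} [DecidableEq ι]
    (s : Finset ι) (f : ι → α) (N : α)
    (hp : ∀ i ∈ s, Prime (f i))
    (hd : ∀ i ∈ s, f i ∣ N)
    (hna : ∀ i ∈ s, ∀ j ∈ s, i ≠ j → ¬ (f i ∣ f j)) :
    (∏ i ∈ s, f i) ∣ N := by
  induction s using Finset.induction_on generalizing N with
  | empty => simp
  | insert a s ha ih =>
    obtain ⟨M, hM⟩ := hd a (Finset.mem_insert_self a s)
    have hiM : ∀ i ∈ s, f i ∣ M := by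
      intro i hi
      have hia : i ≠ a := fun h => ha (h ▸ hi)
      have hdvd : f i ∣ f a * M := hM ▸ hd i (Finset.mem_insert_of_mem hi)
      rcases (hp i (Finset.mem_insert_of_mem hi)).dvd_mul.mp hdvd with h | h
      · exact absurd h (hna i (Finset.mem_insert_of_mem hi) a (Finset.mem_insert_self a s) hia)
      · exact h
    rw [Finset.prod_insert ha, hM]
    exact mul_dvd_mul_left (f a)
      (ih M (fun i hi => hp i (Finset.mem_insert_of_mem hi)) hiM
        (fun i hi j hj => hna i (Finset.mem_insert_of_mem hi) j (Finset.mem_insert_of_mem hj)))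

noncomputable section
namespace BKaux

variable (n : ℕ)

/-- left esymm -/
def esL (i : Fin n) : MvPolynomial (Fin n ⊕ Fin n) ℂ :=
  rename Sum.inl (esymm (Fin n) ℂ (i.1 + 1))

def esR (i : Fin n) : MvPolynomial (Fin n ⊕ Fin n) ℂ :=
  rename Sum.inr (esymm (Fin n) ℂ (i.1 + 1))

def Phi : MvPolynomial (Fin n ⊕ Fin n) ℂ →ₐ[ℂ] MvPolynomial (Fin n ⊕ Fin n) ℂ :=
  aeval (Sum.elim (esL n) (esR n))

abbrev Rn := MvPolynomial (Fin n) ℂ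

lemma biSymm_mem_range {P : MvPolynomial (Fin n ⊕ Fin n) ℂ}
    (hL : ∀ σ : Equiv.Perm (Fin n), rename (Sum.map ⇑σ id) P = P)
    (hR : ∀ τ : Equiv.Perm (Fin n), rename (Sum.map id ⇑τ) P = P) :
    ∃ H, Phi n H = P := by
  classical
  set e := sumAlgEquiv ℂ (Fin n) (Fin n) with he
  have heXl : ∀ b : Fin n, e (X (Sum.inl b)) = X b := fun b => by
    simp [he, sumToIter_Xl]
  have heXr : ∀ b : Fin n, e (X (Sum.inr b)) = C (X b) := fun b => by
    simp [he, sumToIter_Xr]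
  have heC : ∀ r : ℂ, e (C r) = C (C r) := fun r => by
    simp [he, sumToIter_C]
  -- Step A : e P is symmetric
  have stepA : (e P).IsSymmetric := by
    intro σ
    have comm : ∀ p, rename ⇑σ (e p) = e (rename (Sum.map ⇑σ id) p) := by
      have h := MvPolynomial.ringHom_ext (R := ℂ) (σ := Fin n ⊕ Fin n)
        (f := (rename ⇑σ : MvPolynomial (Fin n) (Rn n) →ₐ[Rn n] _).toRingHom.comp
          e.toAlgHom.toRingHom)
        (g := e.toAlgHom.toRingHom.comp
          (rename (Sum.map ⇑σ id) : MvPolynomial (Fin n ⊕ Fin n) ℂ →ₐ[ℂ] _).toRingHom)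
        (fun r => by simp [heC])
        (fun v => by
          cases v with
          | inl i => simp [heXl]
          | inr i => simp [heXr])
      exact fun p => DFunLike.congr_fun h p
    rw [comm P, hL σ]
  -- Step B : FTSP over Rn
  obtain ⟨G, hG⟩ := esymmAlgHom_fin_surjective (R := Rn n) (m := n) (n := n) le_rfl
    ⟨e P, stepA⟩
  have hGval : aeval (fun i : Fin n => esymm (Fin n) (Rn n) (i.1 + 1)) G = e P := by
    have := congrArg Subtype.val hG
    rwa [esymmAlgHom_apply] at this
  -- Step C : coefficients of G are symmetric
  have stepC : ∀ d : Fin n →₀ ℕ, (coeff d G).IsSymmetric := by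
    intro d τ
    set mτ := (rename ⇑τ : Rn n →ₐ[ℂ] Rn n).toRingHom with hmτ
    have c1 : map mτ (e P) = e P := by
      have comm : ∀ p, map mτ (e p) = e (rename (Sum.map id ⇑τ) p) := by
        have h := MvPolynomial.ringHom_ext (R := ℂ) (σ := Fin n ⊕ Fin n)
          (f := (map mτ).comp e.toAlgHom.toRingHom)
          (g := e.toAlgHom.toRingHom.comp
            (rename (Sum.map id ⇑τ) : MvPolynomial (Fin n ⊕ Fin n) ℂ →ₐ[ℂ] _).toRingHom)
          (fun r => by simp [heC, hmτ])
          (fun v => by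
            cases v with
            | inl i => simp [heXl]
            | inr i => simp [heXr, hmτ])
        exact fun p => DFunLike.congr_fun h p
      rw [comm P, hR τ]
    have c2 : aeval (fun i : Fin n => esymm (Fin n) (Rn n) (i.1 + 1)) (map mτ G)
        = map mτ (aeval (fun i : Fin n => esymm (Fin n) (Rn n) (i.1 + 1)) G) := by
      have h := MvPolynomial.ringHom_ext (R := Rn n) (σ := Fin n)
        (f := (aeval (fun i : Fin n => esymm (Fin n) (Rn n) (i.1 + 1))
            : MvPolynomial (Fin n) (Rn n) →ₐ[Rn n] _).toRingHom.comp (map mτ))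
        (g := (map mτ).comp
          (aeval (fun i : Fin n => esymm (Fin n) (Rn n) (i.1 + 1))
            : MvPolynomial (Fin n) (Rn n) →ₐ[Rn n] _).toRingHom)
        (fun r => by simp)
        (fun i => by simp [map_esymm])
      exact DFunLike.congr_fun h G
    have c3 : map mτ G = G := by
      have hinj : Function.Injective (esymmAlgHom (Fin n) (Rn n) n) :=
        esymmAlgHom_fin_injective (Rn n) le_rfl
      have hval : ∀ p : MvPolynomial (Fin n) (Rn n),
          (esymmAlgHom (Fin n) (Rn n) n p).val
            = aeval (fun i : Fin n => esymm (Fin n) (Rn n) (i.1 + 1)) p :=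
        fun p => esymmAlgHom_apply p
      apply hinj
      apply Subtype.val_injective
      rw [hval, hval, c2, hGval, c1]
    calc rename ⇑τ (coeff d G) = coeff d (map mτ G) := (coeff_map mτ G d).symm
      _ = coeff d G := by rw [c3]
  -- Step D/E : lift G through the coefficient map
  have stepD : ∀ d : Fin n →₀ ℕ, ∃ g : MvPolynomial (Fin n) ℂ,
      aeval (fun i : Fin n => esymm (Fin n) ℂ (i.1 + 1)) g = coeff d G := by
    intro d
    obtain ⟨g, hg⟩ := esymmAlgHom_fin_surjective (R := ℂ) (m := n) (n := n) le_rfl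
      ⟨coeff d G, stepC d⟩
    exact ⟨g, by
      have := congrArg Subtype.val hg
      rwa [esymmAlgHom_apply] at this⟩
  choose g hg using stepD
  set esC := (aeval (fun i : Fin n => esymm (Fin n) ℂ (i.1 + 1))
      : MvPolynomial (Fin n) ℂ →ₐ[ℂ] Rn n).toRingHom with hesC
  set G' : MvPolynomial (Fin n) (Rn n) :=
    ∑ d ∈ G.support, monomial d (g d) with hG'
  have stepE : map esC G' = G := by
    rw [hG']
    simp only [map_sum]
    conv_rhs => rw [G.as_sum]
    refine Finset.sum_congr rfl fun d _ => ?_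
    rw [map_monomial]
    congr 1
    exact hg d
  -- Step F : assemble
  refine ⟨e.symm G', ?_⟩
  set Aout := (aeval (fun i : Fin n => esymm (Fin n) (Rn n) (i.1 + 1))
      : MvPolynomial (Fin n) (Rn n) →ₐ[Rn n] MvPolynomial (Fin n) (Rn n)) with hAout
  have hsymmL : ∀ k : ℕ, e.symm (esymm (Fin n) (Rn n) k)
      = rename Sum.inl (esymm (Fin n) ℂ k) := by
    intro k
    apply e.injective
    rw [AlgEquiv.apply_symm_apply]
    have := DFunLike.congr_fun (sumAlgEquiv_comp_rename_inl ℂ (Fin n) (Fin n))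
      (esymm (Fin n) ℂ k)
    simp only [AlgHom.coe_comp, Function.comp_apply, AlgEquiv.toAlgHom_eq_coe,
      AlgHom.coe_coe] at this
    rw [← he] at this
    rw [show e ((rename Sum.inl) (esymm (Fin n) ℂ k)) = _ from this]
    show esymm (Fin n) (Rn n) k
      = map (Algebra.ofId ℂ (Rn n)).toRingHom (esymm (Fin n) ℂ k)
    rw [map_esymm]
  have hsymmR : ∀ p : Rn n, e.symm (C p) = rename Sum.inr p := by
    intro p
    apply e.injective
    rw [AlgEquiv.apply_symm_apply]
    have := DFunLike.congr_fun (sumAlgEquiv_comp_rename_inr ℂ (Fin n) (Fin n)) p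
    simp only [AlgHom.coe_comp, Function.comp_apply, AlgEquiv.toAlgHom_eq_coe,
      AlgHom.coe_coe] at this
    rw [← he] at this
    rw [show e ((rename Sum.inr) p) = _ from this]
    rfl
  have key : ∀ p, Phi n p = e.symm (Aout (map esC (e p))) := by
    have h := MvPolynomial.ringHom_ext (R := ℂ) (σ := Fin n ⊕ Fin n)
      (f := (Phi n).toRingHom)
      (g := e.symm.toAlgHom.toRingHom.comp
        (Aout.toRingHom.comp ((map esC).comp e.toAlgHom.toRingHom)))
      (fun r => by
        simp only [AlgEquiv.toAlgHom_eq_coe, AlgHom.toRingHom_eq_coe, RingHom.coe_comp,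
            RingHom.coe_coe, Function.comp_apply, AlgHom.coe_coe, AlgEquiv.coe_toAlgHom]
        rw [heC]
        simp only [map_C, hAout, aeval_C]
        have : esC (C r) = C r := by simp [hesC, algebraMap_eq]
        rw [this]
        have : (algebraMap (Rn n) (MvPolynomial (Fin n) (Rn n))) (C r) = C (C r) := rfl
        rw [this]
        have : e.symm (C (C r)) = C r := by
          apply e.injective; rw [AlgEquiv.apply_symm_apply, heC]
        rw [this]
        simp [Phi, algebraMap_eq])
      (fun v => by
        cases v with
        | inl i =>
          simp only [AlgEquiv.toAlgHom_eq_coe, AlgHom.toRingHom_eq_coe, RingHom.coe_comp,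
            RingHom.coe_coe, Function.comp_apply, AlgHom.coe_coe, AlgEquiv.coe_toAlgHom]
          rw [heXl]
          simp only [map_X, hAout, aeval_X]
          rw [hsymmL]
          simp [Phi, esL]
        | inr i =>
          simp only [AlgEquiv.toAlgHom_eq_coe, AlgHom.toRingHom_eq_coe, RingHom.coe_comp,
            RingHom.coe_coe, Function.comp_apply, AlgHom.coe_coe, AlgEquiv.coe_toAlgHom]
          rw [heXr]
          simp only [map_C, hAout, aeval_C]
          have h1 : esC (X i) = esymm (Fin n) ℂ (i.1 + 1) := by simp [hesC]
          rw [h1]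
          have h2 : (algebraMap (Rn n) (MvPolynomial (Fin n) (Rn n)))
              (esymm (Fin n) ℂ (i.1 + 1)) = C (esymm (Fin n) ℂ (i.1 + 1)) := rfl
          rw [h2, hsymmR]
          simp [Phi, esR])
    exact fun p => DFunLike.congr_fun h p
  rw [key, AlgEquiv.apply_symm_apply, stepE]
  have : Aout G = e P := hGval
  rw [this, AlgEquiv.symm_apply_apply]


-- ### Determinant part

def Amat : Matrix (Fin n) (Fin n) (MvPolynomial (Fin n ⊕ Fin n) ℂ) :=
  Matrix.of fun j k => ∏ l ∈ Finset.univ.erase k,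
    (1 - X (Sum.inl j) * X (Sum.inr l)) ^ 2

def Npoly : MvPolynomial (Fin n ⊕ Fin n) ℂ := (Amat n).det

def Dpoly : MvPolynomial (Fin n ⊕ Fin n) ℂ :=
  ∏ j : Fin n, ∏ k : Fin n, (1 - X (Sum.inl j) * X (Sum.inr k)) ^ 2

def Vx : MvPolynomial (Fin n ⊕ Fin n) ℂ :=
  ∏ j : Fin n, ∏ k ∈ Finset.Ioi j, (X (Sum.inl j) - X (Sum.inl k))

def Vy : MvPolynomial (Fin n ⊕ Fin n) ℂ :=
  ∏ j : Fin n, ∏ k ∈ Finset.Ioi j, (X (Sum.inr j) - X (Sum.inr k))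

lemma Vx_ne_zero : Vx n ≠ 0 := by
  rw [Vx, Finset.prod_ne_zero_iff]
  intro j _
  rw [Finset.prod_ne_zero_iff]
  intro k hk
  have h : (Sum.inl j : Fin n ⊕ Fin n) ≠ Sum.inl k := by
    simp only [ne_eq, Sum.inl.injEq]
    exact (Finset.mem_Ioi.mp hk).ne
  exact sub_ne_zero.mpr fun hx => h (X_injective hx)

lemma Vy_ne_zero : Vy n ≠ 0 := by
  rw [Vy, Finset.prod_ne_zero_iff]
  intro j _
  rw [Finset.prod_ne_zero_iff]
  intro k hk
  have h : (Sum.inr j : Fin n ⊕ Fin n) ≠ Sum.inr k := by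
    simp only [ne_eq, Sum.inr.injEq]
    exact (Finset.mem_Ioi.mp hk).ne
  exact sub_ne_zero.mpr fun hx => h (X_injective hx)

open scoped Classical in
def pairSet : Finset ((Fin n × Fin n) ⊕ (Fin n × Fin n)) :=
  Finset.univ.filter (Sum.elim (fun p : Fin n × Fin n => p.1 < p.2)
    (fun p : Fin n × Fin n => p.1 < p.2))

def pairPoly : (Fin n × Fin n) ⊕ (Fin n × Fin n) → MvPolynomial (Fin n ⊕ Fin n) ℂ :=
  Sum.elim (fun p => X (Sum.inl p.1) - X (Sum.inl p.2))
    (fun p => X (Sum.inr p.1) - X (Sum.inr p.2))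

lemma ite_Ioi (g : Fin n → Fin n → MvPolynomial (Fin n ⊕ Fin n) ℂ) (j : Fin n) :
    (∏ k : Fin n, if j < k then g j k else 1) = ∏ k ∈ Finset.Ioi j, g j k := by
  rw [← Finset.filter_lt_eq_Ioi, Finset.prod_filter]

lemma prod_pairSet : ∏ i ∈ pairSet n, pairPoly n i = Vx n * Vy n := by
  classical
  rw [pairSet, Finset.prod_filter, Fintype.prod_sum_type]
  simp only [Sum.elim_inl, Sum.elim_inr, pairPoly]
  rw [Fintype.prod_prod_type, Fintype.prod_prod_type]
  rw [Vx, Vy]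
  congr 1
  · exact Finset.prod_congr rfl fun j _ => by convert ite_Ioi n (fun j k => X (Sum.inl j) - X (Sum.inl k)) j; rename_i k _; by_cases h : j < k <;> simp [h]
  · exact Finset.prod_congr rfl fun j _ => by convert ite_Ioi n (fun j k => X (Sum.inr j) - X (Sum.inr k)) j; rename_i k _; by_cases h : j < k <;> simp [h]

lemma pairPoly_dvd_Npoly : ∀ i ∈ pairSet n, pairPoly n i ∣ Npoly n := by
  classical
  rintro (⟨j, k⟩ | ⟨j, k⟩) hi <;>
    simp only [pairSet, Finset.mem_filter, Sum.elim_inl, Sum.elim_inr] at hi <;>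
    obtain ⟨-, hjk⟩ := hi
  · -- left pair : rows j and k become equal
    refine X_sub_X_dvd (by simp [Sum.inl.injEq, hjk.ne'] : (Sum.inl k : Fin n ⊕ Fin n) ≠ Sum.inl j) ?_
    set S := aeval (R := ℂ) (Function.update (X : (Fin n ⊕ Fin n) → MvPolynomial (Fin n ⊕ Fin n) ℂ)
      (Sum.inl j) (X (Sum.inl k)))
    rw [Npoly]
    have hdet : S (Amat n).det = ((Amat n).map S).det := by
      exact (RingHom.map_det S.toRingHom (Amat n))
    rw [hdet]
    refine Matrix.det_zero_of_row_eq (show j ≠ k from hjk.ne) ?_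
    funext l
    simp only [Matrix.map_apply, Amat, Matrix.of_apply, map_prod, map_pow, map_sub, map_one,
      map_mul, aeval_X, S]
    refine Finset.prod_congr rfl fun m _ => ?_
    rw [Function.update_of_ne (by simp : (Sum.inr m : Fin n ⊕ Fin n) ≠ Sum.inl j),
      Function.update_self,
      Function.update_of_ne (by simp [Sum.inl.injEq, hjk.ne'] : (Sum.inl k : Fin n ⊕ Fin n) ≠ Sum.inl j)]
  · -- right pair : columns j and k become equal
    refine X_sub_X_dvd (by simp [Sum.inr.injEq, hjk.ne'] : (Sum.inr k : Fin n ⊕ Fin n) ≠ Sum.inr j) ?_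
    set S := aeval (R := ℂ) (Function.update (X : (Fin n ⊕ Fin n) → MvPolynomial (Fin n ⊕ Fin n) ℂ)
      (Sum.inr j) (X (Sum.inr k)))
    rw [Npoly]
    have hdet : S (Amat n).det = ((Amat n).map S).det := by
      exact (RingHom.map_det S.toRingHom (Amat n))
    rw [hdet]
    refine Matrix.det_zero_of_column_eq (show j ≠ k from hjk.ne) fun r => ?_
    simp only [Matrix.map_apply, Amat, Matrix.of_apply, map_prod, map_pow, map_sub, map_one,
      map_mul, aeval_X, S]
    refine Finset.prod_bij' (fun m _ => Equiv.swap j k m) (fun m _ => Equiv.swap j k m)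
      ?_ ?_ ?_ ?_ ?_
    · intro m hm
      simp only [Finset.mem_erase, Finset.mem_univ, and_true] at hm ⊢
      intro h
      exact hm ((Equiv.swap j k).injective (h.trans (Equiv.swap_apply_left j k).symm))
    · intro m hm
      simp only [Finset.mem_erase, Finset.mem_univ, and_true] at hm ⊢
      intro h
      exact hm ((Equiv.swap j k).injective (h.trans (Equiv.swap_apply_right j k).symm))
    · intro m _; exact Equiv.swap_apply_self j k m
    · intro m _; exact Equiv.swap_apply_self j k m
    · intro m hm
      simp only [Finset.mem_erase, Finset.mem_univ, and_true] at hm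
      by_cases hmk : m = k
      · subst hmk
        rw [Equiv.swap_apply_right]
        rw [Function.update_of_ne (by simp [Sum.inr.injEq, hjk.ne'] :
            (Sum.inr m : Fin n ⊕ Fin n) ≠ Sum.inr j), Function.update_self]
      · rw [Equiv.swap_apply_of_ne_of_ne hm hmk]


lemma exists_Q : ∃ Q, Npoly n = (Vx n * Vy n) * Q := by
  classical
  have hdvd : (∏ i ∈ pairSet n, pairPoly n i) ∣ Npoly n := by
    refine prod_dvd_of_primes _ _ _ ?_ (pairPoly_dvd_Npoly n) ?_
    · rintro (⟨p, q⟩ | ⟨p, q⟩) hi <;>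
        simp only [pairSet, Finset.mem_filter, Finset.mem_univ, true_and, Sum.elim_inl,
          Sum.elim_inr] at hi
      · exact X_sub_X_prime (by simp [Sum.inl.injEq]; exact hi.ne')
      · exact X_sub_X_prime (by simp [Sum.inr.injEq]; exact hi.ne')
    · rintro (⟨p, q⟩ | ⟨p, q⟩) hi (⟨p', q'⟩ | ⟨p', q'⟩) hi' hne <;>
        simp only [pairSet, Finset.mem_filter, Finset.mem_univ, true_and, Sum.elim_inl,
          Sum.elim_inr] at hi hi' <;>
        simp only [pairPoly, Sum.elim_inl, Sum.elim_inr]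
      · refine X_sub_X_not_dvd (by simp [Sum.inl.injEq]; exact hi'.ne) (by simp [Sum.inl.injEq]; exact hi.ne) ?_ ?_
        · simp only [Sum.inl.injEq, not_and]
          intro h1 h2
          exact hne (by simp [Prod.ext_iff, h1.symm, h2.symm])
        · simp only [Sum.inl.injEq, not_and]
          intro h1 h2
          rw [h1] at hi'
          rw [h2] at hi'
          exact absurd (hi.trans hi') (lt_irrefl _)
      · exact X_sub_X_not_dvd (by simp [Sum.inr.injEq]; exact hi'.ne) (by simp [Sum.inl.injEq]; exact hi.ne) (by simp) (by simp)
      · exact X_sub_X_not_dvd (by simp [Sum.inl.injEq]; exact hi'.ne) (by simp [Sum.inr.injEq]; exact hi.ne) (by simp) (by simp)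
      · refine X_sub_X_not_dvd (by simp [Sum.inr.injEq]; exact hi'.ne) (by simp [Sum.inr.injEq]; exact hi.ne) ?_ ?_
        · simp only [Sum.inr.injEq, not_and]
          intro h1 h2
          exact hne (by simp [Prod.ext_iff, h1.symm, h2.symm])
        · simp only [Sum.inr.injEq, not_and]
          intro h1 h2
          rw [h1] at hi'
          rw [h2] at hi'
          exact absurd (hi.trans hi') (lt_irrefl _)
  rw [prod_pairSet] at hdvd
  exact hdvd


def epsPoly (σ : Equiv.Perm (Fin n)) : MvPolynomial (Fin n ⊕ Fin n) ℂ :=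
  ((Equiv.Perm.sign σ : ℤ) : MvPolynomial (Fin n ⊕ Fin n) ℂ)

lemma epsPoly_ne_zero (σ : Equiv.Perm (Fin n)) : epsPoly n σ ≠ 0 := by
  rcases Int.units_eq_one_or (Equiv.Perm.sign σ) with h | h <;> simp [epsPoly, h]

lemma renameL_Npoly (σ : Equiv.Perm (Fin n)) :
    rename (Sum.map ⇑σ id) (Npoly n) = epsPoly n σ * Npoly n := by
  rw [Npoly]
  have hd : rename (Sum.map ⇑σ id) (Amat n).det = ((Amat n).map (rename (Sum.map ⇑σ id))).det :=
    RingHom.map_det (rename (Sum.map ⇑σ id) : MvPolynomial (Fin n ⊕ Fin n) ℂ →ₐ[ℂ] _).toRingHom (Amat n)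
  rw [hd]
  have hmap : (Amat n).map (rename (Sum.map ⇑σ id)) = (Amat n).submatrix ⇑σ id := by
    ext j k
    simp only [Matrix.map_apply, Matrix.submatrix_apply, id_eq, Amat, Matrix.of_apply,
      map_prod, map_pow, map_sub, map_one, map_mul, rename_X, Sum.map_inl, Sum.map_inr]
  rw [hmap, Matrix.det_permute]
  rfl

lemma renameR_Npoly (τ : Equiv.Perm (Fin n)) :
    rename (Sum.map id ⇑τ) (Npoly n) = epsPoly n τ * Npoly n := by
  classical
  rw [Npoly]
  have hd : rename (Sum.map id ⇑τ) (Amat n).det = ((Amat n).map (rename (Sum.map id ⇑τ))).det :=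
    RingHom.map_det (rename (Sum.map id ⇑τ) : MvPolynomial (Fin n ⊕ Fin n) ℂ →ₐ[ℂ] _).toRingHom (Amat n)
  rw [hd]
  have hmap : (Amat n).map (rename (Sum.map id ⇑τ)) = (Amat n).submatrix id ⇑τ := by
    refine Matrix.ext fun j k => ?_
    simp only [Matrix.map_apply, Matrix.submatrix_apply, id_eq, Amat, Matrix.of_apply,
      map_prod, map_pow, map_sub, map_one, map_mul, rename_X, Sum.map_inl, Sum.map_inr]
    refine Finset.prod_bij' (fun m _ => τ m) (fun m _ => τ.symm m) ?_ ?_ ?_ ?_ ?_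
    · intro m hm
      simp only [Finset.mem_erase, Finset.mem_univ, and_true] at hm ⊢
      exact fun h => hm (τ.injective h)
    · intro m hm
      simp only [Finset.mem_erase, Finset.mem_univ, and_true] at hm ⊢
      intro h
      exact hm (by rw [← h, Equiv.apply_symm_apply])
    · intro m _; exact τ.symm_apply_apply m
    · intro m _; exact τ.apply_symm_apply m
    · intro m _; rfl
  rw [hmap, Matrix.det_permute']
  rfl

lemma Vx_eq_vandermonde :
    Vx n = (∏ j : Fin n, ∏ _k ∈ Finset.Ioi j, (-1 : MvPolynomial (Fin n ⊕ Fin n) ℂ))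
      * (Matrix.vandermonde fun j : Fin n => X (Sum.inl j) :
          Matrix (Fin n) (Fin n) (MvPolynomial (Fin n ⊕ Fin n) ℂ)).det := by
  rw [Matrix.det_vandermonde]
  rw [← Finset.prod_mul_distrib]
  refine Finset.prod_congr rfl fun j _ => ?_
  rw [← Finset.prod_mul_distrib]
  refine Finset.prod_congr rfl fun k _ => ?_
  ring

lemma Vy_eq_vandermonde :
    Vy n = (∏ j : Fin n, ∏ _k ∈ Finset.Ioi j, (-1 : MvPolynomial (Fin n ⊕ Fin n) ℂ))
      * (Matrix.vandermonde fun j : Fin n => X (Sum.inr j) :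
          Matrix (Fin n) (Fin n) (MvPolynomial (Fin n ⊕ Fin n) ℂ)).det := by
  rw [Matrix.det_vandermonde]
  rw [← Finset.prod_mul_distrib]
  refine Finset.prod_congr rfl fun j _ => ?_
  rw [← Finset.prod_mul_distrib]
  refine Finset.prod_congr rfl fun k _ => ?_
  ring

lemma renameL_Vx (σ : Equiv.Perm (Fin n)) :
    rename (Sum.map ⇑σ id) (Vx n) = epsPoly n σ * Vx n := by
  rw [Vx_eq_vandermonde, map_mul]
  have h1 : rename (Sum.map ⇑σ id)
      (∏ j : Fin n, ∏ _k ∈ Finset.Ioi j, (-1 : MvPolynomial (Fin n ⊕ Fin n) ℂ))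
      = ∏ j : Fin n, ∏ _k ∈ Finset.Ioi j, (-1 : MvPolynomial (Fin n ⊕ Fin n) ℂ) := by
    simp
  rw [h1]
  have h2 : rename (Sum.map ⇑σ id)
      (Matrix.vandermonde fun j : Fin n => X (Sum.inl j) :
        Matrix (Fin n) (Fin n) (MvPolynomial (Fin n ⊕ Fin n) ℂ)).det
      = ((Matrix.vandermonde fun j : Fin n => X (Sum.inl j) :
        Matrix (Fin n) (Fin n) (MvPolynomial (Fin n ⊕ Fin n) ℂ)).submatrix ⇑σ id).det := by
    have hd : rename (Sum.map ⇑σ id)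
        (Matrix.vandermonde fun j : Fin n => X (Sum.inl j) :
          Matrix (Fin n) (Fin n) (MvPolynomial (Fin n ⊕ Fin n) ℂ)).det
        = ((Matrix.vandermonde fun j : Fin n => X (Sum.inl j) :
          Matrix (Fin n) (Fin n) (MvPolynomial (Fin n ⊕ Fin n) ℂ)).map
            (rename (Sum.map ⇑σ id))).det :=
      RingHom.map_det (rename (Sum.map ⇑σ id) : MvPolynomial (Fin n ⊕ Fin n) ℂ →ₐ[ℂ] _).toRingHom _
    rw [hd]
    congr 1
    ext j k
    simp [Matrix.vandermonde]
  rw [h2, Matrix.det_permute]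
  simp only [epsPoly]
  ring

lemma renameR_Vy (τ : Equiv.Perm (Fin n)) :
    rename (Sum.map id ⇑τ) (Vy n) = epsPoly n τ * Vy n := by
  rw [Vy_eq_vandermonde, map_mul]
  have h1 : rename (Sum.map id ⇑τ)
      (∏ j : Fin n, ∏ _k ∈ Finset.Ioi j, (-1 : MvPolynomial (Fin n ⊕ Fin n) ℂ))
      = ∏ j : Fin n, ∏ _k ∈ Finset.Ioi j, (-1 : MvPolynomial (Fin n ⊕ Fin n) ℂ) := by
    simp
  rw [h1]
  have h2 : rename (Sum.map id ⇑τ)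
      (Matrix.vandermonde fun j : Fin n => X (Sum.inr j) :
        Matrix (Fin n) (Fin n) (MvPolynomial (Fin n ⊕ Fin n) ℂ)).det
      = ((Matrix.vandermonde fun j : Fin n => X (Sum.inr j) :
        Matrix (Fin n) (Fin n) (MvPolynomial (Fin n ⊕ Fin n) ℂ)).submatrix ⇑τ id).det := by
    have hd : rename (Sum.map id ⇑τ)
        (Matrix.vandermonde fun j : Fin n => X (Sum.inr j) :
          Matrix (Fin n) (Fin n) (MvPolynomial (Fin n ⊕ Fin n) ℂ)).det
        = ((Matrix.vandermonde fun j : Fin n => X (Sum.inr j) :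
          Matrix (Fin n) (Fin n) (MvPolynomial (Fin n ⊕ Fin n) ℂ)).map
            (rename (Sum.map id ⇑τ))).det :=
      RingHom.map_det (rename (Sum.map id ⇑τ) : MvPolynomial (Fin n ⊕ Fin n) ℂ →ₐ[ℂ] _).toRingHom _
    rw [hd]
    congr 1
    ext j k
    simp [Matrix.vandermonde]
  rw [h2, Matrix.det_permute]
  simp only [epsPoly]
  ring

lemma renameL_Vy (σ : Equiv.Perm (Fin n)) :
    rename (Sum.map ⇑σ id) (Vy n) = Vy n := by
  simp [Vy, map_prod]

lemma renameR_Vx (τ : Equiv.Perm (Fin n)) :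
    rename (Sum.map id ⇑τ) (Vx n) = Vx n := by
  simp [Vx, map_prod]

lemma renameL_Dpoly (σ : Equiv.Perm (Fin n)) :
    rename (Sum.map ⇑σ id) (Dpoly n) = Dpoly n := by
  rw [Dpoly]
  rw [map_prod]
  have : ∀ j : Fin n, rename (Sum.map ⇑σ id)
        (∏ k : Fin n, (1 - X (Sum.inl j) * X (Sum.inr k)) ^ 2)
      = ∏ k : Fin n, ((1 : MvPolynomial (Fin n ⊕ Fin n) ℂ) - X (Sum.inl (σ j)) * X (Sum.inr k)) ^ 2 := by
    intro j
    simp [map_prod]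
  simp only [this]
  exact Equiv.prod_comp σ fun j => ∏ k : Fin n, (1 - X (Sum.inl j) * X (Sum.inr k)) ^ 2

lemma renameR_Dpoly (τ : Equiv.Perm (Fin n)) :
    rename (Sum.map id ⇑τ) (Dpoly n) = Dpoly n := by
  rw [Dpoly]
  rw [map_prod]
  refine Finset.prod_congr rfl fun j _ => ?_
  have : rename (Sum.map id ⇑τ)
        (∏ k : Fin n, (1 - X (Sum.inl j) * X (Sum.inr k)) ^ 2)
      = ∏ k : Fin n, ((1 : MvPolynomial (Fin n ⊕ Fin n) ℂ) - X (Sum.inl j) * X (Sum.inr (τ k))) ^ 2 := by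
    simp [map_prod]
  rw [this]
  exact Equiv.prod_comp τ fun k => (1 - X (Sum.inl j) * X (Sum.inr k)) ^ 2


lemma exists_H : ∃ H₁ H₂ : MvPolynomial (Fin n ⊕ Fin n) ℂ,
    Npoly n = (Vx n * Vy n) * Phi n H₁ ∧ Phi n H₂ = Dpoly n := by
  obtain ⟨Q, hQ⟩ := exists_Q n
  have hVne : Vx n * Vy n ≠ 0 := mul_ne_zero (Vx_ne_zero n) (Vy_ne_zero n)
  have hQL : ∀ σ : Equiv.Perm (Fin n), rename (Sum.map ⇑σ id) Q = Q := by
    intro σ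
    have h1 := congrArg (rename (Sum.map ⇑σ id)) hQ
    rw [map_mul, map_mul, renameL_Npoly, renameL_Vx, renameL_Vy, hQ] at h1
    have h2 : epsPoly n σ * ((Vx n * Vy n) * rename (Sum.map ⇑σ id) Q)
        = epsPoly n σ * ((Vx n * Vy n) * Q) := by
      linear_combination -h1
    have h3 := mul_left_cancel₀ (epsPoly_ne_zero n σ) h2
    exact mul_left_cancel₀ hVne h3
  have hQR : ∀ τ : Equiv.Perm (Fin n), rename (Sum.map id ⇑τ) Q = Q := by
    intro τ
    have h1 := congrArg (rename (Sum.map id ⇑τ)) hQ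
    rw [map_mul, map_mul, renameR_Npoly, renameR_Vx, renameR_Vy, hQ] at h1
    have h2 : epsPoly n τ * ((Vx n * Vy n) * rename (Sum.map id ⇑τ) Q)
        = epsPoly n τ * ((Vx n * Vy n) * Q) := by
      linear_combination -h1
    have h3 := mul_left_cancel₀ (epsPoly_ne_zero n τ) h2
    exact mul_left_cancel₀ hVne h3
  obtain ⟨H₁, hH₁⟩ := biSymm_mem_range n hQL hQR
  obtain ⟨H₂, hH₂⟩ := biSymm_mem_range n (fun σ => renameL_Dpoly n σ)
    (fun τ => renameR_Dpoly n τ)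
  exact ⟨H₁, H₂, by rw [hH₁]; exact hQ, hH₂⟩

-- ### evaluation lemmas

lemma eval_esymm_symmMap (lam : Fin n → ℂ) (i : Fin n) :
    eval lam (esymm (Fin n) ℂ (i.1 + 1)) = symmMap n lam i := by
  simp [esymm, symmMap, map_sum, map_prod]

lemma eval_Phi (lam mu : Fin n → ℂ) (H : MvPolynomial (Fin n ⊕ Fin n) ℂ) :
    eval (Sum.elim lam mu) (Phi n H)
      = eval (Sum.elim (symmMap n lam) (symmMap n mu)) H := by
  have h := MvPolynomial.ringHom_ext (R := ℂ) (σ := Fin n ⊕ Fin n)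
    (f := (eval (Sum.elim lam mu)).comp (Phi n).toRingHom)
    (g := eval (Sum.elim (symmMap n lam) (symmMap n mu)))
    (fun r => by simp [Phi])
    (fun v => by
      cases v with
      | inl i =>
        simp only [RingHom.comp_apply, AlgHom.toRingHom_eq_coe, RingHom.coe_coe,
          Phi, aeval_X, Sum.elim_inl, esL]
        rw [eval_rename]
        have : Sum.elim lam mu ∘ Sum.inl = lam := rfl
        rw [this, eval_esymm_symmMap]
        simp
      | inr i =>
        simp only [RingHom.comp_apply, AlgHom.toRingHom_eq_coe, RingHom.coe_coe,
          Phi, aeval_X, Sum.elim_inr, esR]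
        rw [eval_rename]
        have : Sum.elim lam mu ∘ Sum.inr = mu := rfl
        rw [this, eval_esymm_symmMap]
        simp)
  exact DFunLike.congr_fun h H

lemma eval_Dpoly (lam mu : Fin n → ℂ) :
    eval (Sum.elim lam mu) (Dpoly n)
      = ∏ j : Fin n, ∏ k : Fin n, (1 - lam j * mu k) ^ 2 := by
  simp [Dpoly, map_prod]

lemma eval_Npoly (lam mu : Fin n → ℂ) :
    eval (Sum.elim lam mu) (Npoly n)
      = Matrix.det (Matrix.of fun j k : Fin n =>
          ∏ l ∈ Finset.univ.erase k, (1 - lam j * mu l) ^ 2) := by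
  rw [Npoly]
  have hd : eval (Sum.elim lam mu) (Amat n).det
      = ((Amat n).map (eval (Sum.elim lam mu))).det :=
    RingHom.map_det (eval (Sum.elim lam mu)) (Amat n)
  rw [hd]
  congr 1
  refine Matrix.ext fun j k => ?_
  simp [Amat, map_prod]

lemma eval_Vx (lam mu : Fin n → ℂ) :
    eval (Sum.elim lam mu) (Vx n) = vandermondeProd n lam := by
  simp [Vx, vandermondeProd, map_prod]

lemma eval_Vy (lam mu : Fin n → ℂ) :
    eval (Sum.elim lam mu) (Vy n) = vandermondeProd n mu := by
  simp [Vy, vandermondeProd, map_prod]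

end BKaux

lemma one_sub_mul_ne_zero {a b : ℂ} (ha : ‖a‖ < 1) (hb : ‖b‖ < 1) : 1 - a * b ≠ 0 := by
  intro h
  have h1 : (1 : ℂ) = a * b := sub_eq_zero.mp h
  have h2 : ‖a * b‖ < 1 := by
    rw [norm_mul]
    nlinarith [norm_nonneg a, norm_nonneg b]
  rw [← h1] at h2
  simp at h2

lemma symmMap_conj (n : ℕ) (mu : Fin n → ℂ) :
    (fun j => (starRingEnd ℂ) (symmMap n mu j))
      = symmMap n (fun i => (starRingEnd ℂ) (mu i)) := by
  funext j
  simp [symmMap, map_sum, map_prod]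

lemma vandermondeProd_conj (n : ℕ) (mu : Fin n → ℂ) :
    vandermondeProd n (fun i => (starRingEnd ℂ) (mu i))
      = (starRingEnd ℂ) (vandermondeProd n mu) := by
  simp [vandermondeProd, map_prod]

lemma det_inv_eq {n : ℕ} (c : Fin n → Fin n → ℂ) (hc : ∀ j k, c j k ≠ 0) :
    Matrix.det (Matrix.of fun j k : Fin n => ((c j k) ^ 2)⁻¹)
      = Matrix.det (Matrix.of fun j k : Fin n =>
          ∏ l ∈ Finset.univ.erase k, (c j l) ^ 2)
        / ∏ j : Fin n, ∏ l : Fin n, (c j l) ^ 2 := by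
  have hPP : (∏ j : Fin n, ∏ l : Fin n, (c j l) ^ 2) ≠ 0 :=
    Finset.prod_ne_zero_iff.mpr fun j _ =>
      Finset.prod_ne_zero_iff.mpr fun l _ => pow_ne_zero 2 (hc j l)
  have hkey : (Matrix.of fun j k : Fin n => ∏ l ∈ Finset.univ.erase k, (c j l) ^ 2)
      = Matrix.of fun j k : Fin n =>
          (∏ l : Fin n, (c j l) ^ 2) * ((c j k) ^ 2)⁻¹ := by
    refine Matrix.ext fun j k => ?_
    simp only [Matrix.of_apply]
    rw [eq_mul_inv_iff_mul_eq₀ (pow_ne_zero 2 (hc j k))]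
    exact Finset.prod_erase_mul _ _ (Finset.mem_univ k)
  rw [hkey, show (Matrix.of fun j k : Fin n => (∏ l : Fin n, (c j l) ^ 2) * ((c j k) ^ 2)⁻¹).det
      = (∏ j : Fin n, ∏ l : Fin n, (c j l) ^ 2) * (Matrix.of fun j k : Fin n => ((c j k) ^ 2)⁻¹).det
      from Matrix.det_mul_column _ _, mul_div_cancel_left₀ _ hPP]

/-- The Bergman kernel of the symmetrized polydisc is a rational function: there are
polynomials `H₁, H₂` in `2n` variables, `H₂` nonvanishing on `𝔾_n × conj(𝔾_n)`, such that
`det[(1 − λ_j conj(μ_k))⁻²] / (V(λ)·conj(V(μ))) = H₁(π_n(λ), conj(π_n(μ))) / H₂(π_n(λ), conj(π_n(μ)))`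
for all `λ, μ ∈ 𝔻^n` with pairwise distinct coordinates. -/
theorem bergman_kernel_symmPolydisc_rational (n : ℕ) :
    ∃ H₁ H₂ : MvPolynomial (Fin n ⊕ Fin n) ℂ,
      (∀ ξ ∈ symmPolydisc n, ∀ η ∈ symmPolydisc n,
        eval (Sum.elim ξ (fun j => (starRingEnd ℂ) (η j))) H₂ ≠ 0) ∧
      (∀ lam ∈ polydisc n, ∀ mu ∈ polydisc n,
        Function.Injective lam → Function.Injective mu →
        Matrix.det (Matrix.of fun j k : Fin n =>
              ((1 - lam j * (starRingEnd ℂ) (mu k)) ^ 2)⁻¹)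
            / (vandermondeProd n lam * (starRingEnd ℂ) (vandermondeProd n mu))
          = eval (Sum.elim (symmMap n lam)
                (fun j => (starRingEnd ℂ) (symmMap n mu j))) H₁
            / eval (Sum.elim (symmMap n lam)
                (fun j => (starRingEnd ℂ) (symmMap n mu j))) H₂) := by
  classical
  obtain ⟨H₁, H₂, hN, hD⟩ := BKaux.exists_H n
  refine ⟨H₁, H₂, ?_, ?_⟩
  · rintro ξ ⟨lam, hlam, rfl⟩ η ⟨mu, hmu, rfl⟩
    rw [symmMap_conj, ← BKaux.eval_Phi, hD, BKaux.eval_Dpoly]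
    rw [Finset.prod_ne_zero_iff]
    intro j _
    rw [Finset.prod_ne_zero_iff]
    intro k _
    exact pow_ne_zero 2 (one_sub_mul_ne_zero (hlam j) (by simpa using hmu k))
  · intro lam hlam mu hmu hinjl hinjm
    have hmuc : ∀ k, ‖(starRingEnd ℂ) (mu k)‖ < 1 := fun k => by simpa using hmu k
    have hc : ∀ j k, (1 : ℂ) - lam j * (starRingEnd ℂ) (mu k) ≠ 0 :=
      fun j k => one_sub_mul_ne_zero (hlam j) (hmuc k)
    have hw : (Sum.elim (symmMap n lam) (fun j => (starRingEnd ℂ) (symmMap n mu j)))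
        = Sum.elim (symmMap n lam) (symmMap n (fun k => (starRingEnd ℂ) (mu k))) := by
      rw [symmMap_conj]
    rw [hw, ← BKaux.eval_Phi, ← BKaux.eval_Phi, hD]
    have hDv : eval (Sum.elim lam (fun k => (starRingEnd ℂ) (mu k))) (BKaux.Dpoly n)
        = ∏ j : Fin n, ∏ k : Fin n, (1 - lam j * (starRingEnd ℂ) (mu k)) ^ 2 :=
      BKaux.eval_Dpoly n _ _
    have hDne : eval (Sum.elim lam (fun k => (starRingEnd ℂ) (mu k))) (BKaux.Dpoly n) ≠ 0 := by
      rw [hDv, Finset.prod_ne_zero_iff]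
      intro j _
      rw [Finset.prod_ne_zero_iff]
      intro k _
      exact pow_ne_zero 2 (hc j k)
    have hVa : vandermondeProd n lam * (starRingEnd ℂ) (vandermondeProd n mu) ≠ 0 := by
      apply mul_ne_zero
      · rw [vandermondeProd, Finset.prod_ne_zero_iff]
        intro j _
        rw [Finset.prod_ne_zero_iff]
        intro k hk
        exact sub_ne_zero.mpr (hinjl.ne (Finset.mem_Ioi.mp hk).ne)
      · rw [map_ne_zero, vandermondeProd, Finset.prod_ne_zero_iff]
        intro j _
        rw [Finset.prod_ne_zero_iff]
        intro k hk
        exact sub_ne_zero.mpr (hinjm.ne (Finset.mem_Ioi.mp hk).ne)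
    have hNv : eval (Sum.elim lam (fun k => (starRingEnd ℂ) (mu k))) (BKaux.Npoly n)
        = (vandermondeProd n lam * (starRingEnd ℂ) (vandermondeProd n mu))
            * eval (Sum.elim lam (fun k => (starRingEnd ℂ) (mu k))) (BKaux.Phi n H₁) := by
      rw [hN, map_mul, map_mul, BKaux.eval_Vx, BKaux.eval_Vy, vandermondeProd_conj]
    have hdet : Matrix.det (Matrix.of fun j k : Fin n =>
          ((1 - lam j * (starRingEnd ℂ) (mu k)) ^ 2)⁻¹)
        = eval (Sum.elim lam (fun k => (starRingEnd ℂ) (mu k))) (BKaux.Npoly n)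
          / eval (Sum.elim lam (fun k => (starRingEnd ℂ) (mu k))) (BKaux.Dpoly n) := by
      rw [det_inv_eq (fun j k => 1 - lam j * (starRingEnd ℂ) (mu k)) hc,
        BKaux.eval_Npoly, hDv]
    rw [hdet, hNv, mul_div_assoc, mul_div_cancel_left₀ _ hVa]

end
end

section
/- For all λ = (λ_1, λ_2), μ = (μ_1, μ_2) ∈ 𝔻² with λ_1 ≠ λ_2 and μ_1 ≠ μ_2, one has det[(1 − λ_j · conj(μ_k))^{−2}]_{1≤j,k≤2} / ((λ_1 − λ_2) · conj(μ_1 − μ_2)) = (2 − (λ_1 + λ_2)(conj(μ_1) + conj(μ_2)) + 2 λ_1 λ_2 conj(μ_1) conj(μ_2)) / ∏_{i=1}^2 ∏_{j=1}^2 (1 − λ_i conj(μ_j))². (This identity is equivalent to the explicit formula for the Bergman kernel of the symmetrized bidisc 𝔾_2.) -/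
open ComplexConjugate
set_option maxHeartbeats 1600000

lemma aux_ne (a b : ℂ) (ha : ‖a‖ < 1) (hb : ‖b‖ < 1) : 1 - a * conj b ≠ 0 := by
  intro h
  have : ‖a * conj b‖ < 1 := by
    rw [norm_mul, RCLike.norm_conj]
    nlinarith [norm_nonneg a, norm_nonneg b]
  rw [sub_eq_zero] at h
  rw [← h] at this
  simp at this

/-- Explicit formula behind the Bergman kernel of the symmetrized bidisc `𝔾₂`:
for `λ, μ ∈ 𝔻²` with distinct coordinates,
`det[(1 − λ_j conj(μ_k))⁻²] / ((λ₁ − λ₂)·conj(μ₁ − μ₂))`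
equals `(2 − (λ₁+λ₂)(conj μ₁ + conj μ₂) + 2λ₁λ₂ conj μ₁ conj μ₂)` divided by
`∏_{i,j}(1 − λᵢ conj μ_j)²`. -/
theorem bergman_kernel_symm_bidisc_formula (l₁ l₂ m₁ m₂ : ℂ)
    (hl₁ : ‖l₁‖ < 1) (hl₂ : ‖l₂‖ < 1) (hm₁ : ‖m₁‖ < 1) (hm₂ : ‖m₂‖ < 1)
    (hl : l₁ ≠ l₂) (hm : m₁ ≠ m₂) :
    Matrix.det !![((1 - l₁ * conj m₁) ^ 2)⁻¹, ((1 - l₁ * conj m₂) ^ 2)⁻¹;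
                  ((1 - l₂ * conj m₁) ^ 2)⁻¹, ((1 - l₂ * conj m₂) ^ 2)⁻¹]
        / ((l₁ - l₂) * conj (m₁ - m₂))
      = (2 - (l₁ + l₂) * (conj m₁ + conj m₂) + 2 * l₁ * l₂ * conj m₁ * conj m₂)
        / ((1 - l₁ * conj m₁) ^ 2 * (1 - l₁ * conj m₂) ^ 2
            * (1 - l₂ * conj m₁) ^ 2 * (1 - l₂ * conj m₂) ^ 2) := by
  have h11 := aux_ne l₁ m₁ hl₁ hm₁
  have h12 := aux_ne l₁ m₂ hl₁ hm₂
  have h21 := aux_ne l₂ m₁ hl₂ hm₁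
  have h22 := aux_ne l₂ m₂ hl₂ hm₂
  have hld : l₁ - l₂ ≠ 0 := sub_ne_zero.mpr hl
  have hmd : conj m₁ - conj m₂ ≠ 0 :=
    sub_ne_zero.mpr fun h => hm (star_injective h)
  rw [Matrix.det_fin_two_of, map_sub]
  rw [div_eq_div_iff (mul_ne_zero hld hmd)
    (mul_ne_zero (mul_ne_zero (mul_ne_zero (pow_ne_zero 2 h11)
      (pow_ne_zero 2 h12)) (pow_ne_zero 2 h21)) (pow_ne_zero 2 h22))]
  rw [← one_div, ← one_div, ← one_div, ← one_div, div_mul_div_comm, div_mul_div_comm, div_sub_div _ _ (mul_ne_zero (pow_ne_zero 2 h11) (pow_ne_zero 2 h22)) (mul_ne_zero (pow_ne_zero 2 h12) (pow_ne_zero 2 h21)), div_mul_eq_mul_div, div_eq_iff (mul_ne_zero (mul_ne_zero (pow_ne_zero 2 h11) (pow_ne_zero 2 h22)) (mul_ne_zero (pow_ne_zero 2 h12) (pow_ne_zero 2 h21)))]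
  ring
end

section
/- Let V ⊆ ℂ be a connected open set and g_1, …, g_l holomorphic functions on V that are algebraically independent over the rational functions: no nonzero polynomial Q in l+1 variables satisfies Q(z, g_1(z), …, g_l(z)) = 0 for all z ∈ V. Let Û ⊆ ℂ^{1+l} be a connected open set containing the graph {(z, g_1(z), …, g_l(z)) : z ∈ V}, and let φ be a holomorphic Nash-algebraic function on Û such that φ(z, g_1(z), …, g_l(z)) = 0 for all z ∈ V. Then φ is identically zero on Û. -/
open MvPolynomial

/-- A holomorphic function `F` on an open set `U ⊆ ℂ^k` is *Nash-algebraic* if there is a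
nonzero polynomial `P(z, X)` in the `k+1` complex variables such that `P(z, F(z)) = 0`
for all `z ∈ U`. -/
def IsNashAlgebraic {k : ℕ} (U : Set (Fin k → ℂ)) (F : (Fin k → ℂ) → ℂ) : Prop :=
  DifferentiableOn ℂ F U ∧
    ∃ P : MvPolynomial (Fin k ⊕ Unit) ℂ, P ≠ 0 ∧
      ∀ z ∈ U, eval (Sum.elim z fun _ => F z) P = 0

/-- The algebra map separating out the `Unit` variable. -/
noncomputable def NashAux.Amap (n : ℕ) :
    MvPolynomial (Fin n ⊕ Unit) ℂ →ₐ[ℂ] Polynomial (MvPolynomial (Fin n) ℂ) :=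
  aeval (Sum.elim (fun i => Polynomial.C (X i)) (fun _ => Polynomial.X))

/-- The ring map back. -/
noncomputable def NashAux.Bmap (n : ℕ) :
    Polynomial (MvPolynomial (Fin n) ℂ) →+* MvPolynomial (Fin n ⊕ Unit) ℂ :=
  Polynomial.eval₂RingHom (rename (R := ℂ) Sum.inl).toRingHom (X (Sum.inr ()))

lemma NashAux.Bmap_Amap (n : ℕ) (p : MvPolynomial (Fin n ⊕ Unit) ℂ) :
    NashAux.Bmap n (NashAux.Amap n p) = p := by
  have : (NashAux.Bmap n).comp (NashAux.Amap n).toRingHom = RingHom.id _ := by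
    apply MvPolynomial.ringHom_ext
    · intro c
      simp [NashAux.Amap, NashAux.Bmap, algebraMap_eq]
    · rintro (i | ⟨⟩) <;> simp [NashAux.Amap, NashAux.Bmap]
  exact DFunLike.congr_fun this p

lemma NashAux.Bmap_eval (n : ℕ) (x : Fin n → ℂ) (t : ℂ)
    (q : Polynomial (MvPolynomial (Fin n) ℂ)) :
    eval (Sum.elim x fun _ => t) (NashAux.Bmap n q) = Polynomial.eval₂ (eval x) t q := by
  have : (eval (Sum.elim x fun _ => t)).comp (NashAux.Bmap n) =
      Polynomial.eval₂RingHom (eval x) t := by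
    apply Polynomial.ringHom_ext
    · intro r
      simp [NashAux.Bmap, eval_rename]
    · simp [NashAux.Bmap]
  exact DFunLike.congr_fun this q

/-- Continuity of evaluation of a multivariate polynomial at continuous arguments. -/
lemma NashAux.continuousOn_eval {σ : Type*} {E : Type*} [TopologicalSpace E]
    {f : E → σ → ℂ} {s : Set E} (hf : ∀ i, ContinuousOn (fun x => f x i) s)
    (p : MvPolynomial σ ℂ) : ContinuousOn (fun x => eval (f x) p) s := by
  apply p.induction_on (fun c => ?_) (fun p q hp hq => ?_) (fun p i hp => ?_)
  · simp only [eval_C]; exact continuousOn_const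
  · simp only [map_add]; exact hp.add hq
  · simp only [map_mul, eval_X]; exact hp.mul (hf i)

/-- A holomorphic function on `ℂⁿ` vanishing near the center of a ball contained in its
domain vanishes on the whole ball (by slicing along complex lines). -/
lemma NashAux.slice_zero {n : ℕ} {U : Set (Fin n → ℂ)} {φ : (Fin n → ℂ) → ℂ}
    (hφ : DifferentiableOn ℂ φ U) (s : Fin n → ℂ) (ρ : ℝ)
    (hball : Metric.ball s ρ ⊆ U) (hev : φ =ᶠ[nhds s] 0) :
    ∀ y ∈ Metric.ball s ρ, φ y = 0 := by
  intro y hy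
  by_cases hys : y = s
  · subst hys; exact hev.self_of_nhds
  set v : Fin n → ℂ := y - s with hv_def
  have hv : v ≠ 0 := sub_ne_zero.mpr hys
  have hvnorm : (0 : ℝ) < ‖v‖ := norm_pos_iff.mpr hv
  set r : ℝ := ρ / ‖v‖ with hr_def
  have hyv : ‖v‖ < ρ := by
    have := Metric.mem_ball.mp hy
    rwa [dist_eq_norm] at this
  have hr1 : 1 < r := (one_lt_div hvnorm).mpr hyv
  set L : ℂ → (Fin n → ℂ) := fun t => s + t • v with hL_def
  have hLdiff : Differentiable ℂ L := by
    apply Differentiable.const_add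
    exact differentiable_id.smul_const v
  have hmaps : ∀ t ∈ Metric.ball (0 : ℂ) r, L t ∈ Metric.ball s ρ := by
    intro t ht
    simp only [Metric.mem_ball, dist_zero_right] at ht
    simp only [L, Metric.mem_ball, dist_eq_norm, add_sub_cancel_left, norm_smul]
    calc ‖t‖ * ‖v‖ < r * ‖v‖ := by exact mul_lt_mul_of_pos_right ht hvnorm
      _ = ρ := by rw [hr_def]; field_simp [hvnorm.ne']
  have hcomp : DifferentiableOn ℂ (φ ∘ L) (Metric.ball (0 : ℂ) r) :=
    hφ.comp hLdiff.differentiableOn (fun t ht => hball (hmaps t ht))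
  have hanal : AnalyticOnNhd ℂ (φ ∘ L) (Metric.ball (0 : ℂ) r) :=
    hcomp.analyticOnNhd Metric.isOpen_ball
  have h0 : (0 : ℂ) ∈ Metric.ball (0 : ℂ) r := by
    simp only [Metric.mem_ball, dist_self]
    linarith
  have hL0 : L 0 = s := by simp [L]
  have htend : Filter.Tendsto L (nhds 0) (nhds s) := by
    have := hLdiff.continuous.tendsto (0 : ℂ)
    rwa [hL0] at this
  have hev0 : (φ ∘ L) =ᶠ[nhds (0 : ℂ)] 0 := htend.eventually hev
  have hEq := hanal.eqOn_zero_of_preconnected_of_eventuallyEq_zero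
    (convex_ball (0 : ℂ) r).isPreconnected h0 hev0
  have h1 : (1 : ℂ) ∈ Metric.ball (0 : ℂ) r := by
    simp only [Metric.mem_ball, dist_zero_right, norm_one]
    exact hr1
  have := hEq h1
  simpa [L, hv_def] using this

/-- Identity principle for holomorphic functions on a connected open subset of `ℂⁿ`. -/
lemma NashAux.ident {n : ℕ} {U : Set (Fin n → ℂ)} (hU : IsOpen U) (hUc : IsPreconnected U)
    {φ : (Fin n → ℂ) → ℂ} (hφ : DifferentiableOn ℂ φ U)
    {x₁ : Fin n → ℂ} (hx₁ : x₁ ∈ U) (hev : φ =ᶠ[nhds x₁] 0) :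
    ∀ y ∈ U, φ y = 0 := by
  set S : Set (Fin n → ℂ) := {x | ∀ᶠ y in nhds x, φ y = 0} with hS_def
  have hSopen : IsOpen S := isOpen_setOf_eventually_nhds
  have key : U ⊆ S := by
    apply hUc.subset_of_closure_inter_subset hSopen ⟨x₁, hx₁, hev⟩
    rintro x ⟨hxcl, hxU⟩
    obtain ⟨ρ, hρpos, hρ⟩ := Metric.isOpen_iff.mp hU x hxU
    obtain ⟨s, hsS, hsx⟩ := Metric.mem_closure_iff.mp hxcl (ρ / 2) (by linarith)
    have hsub : Metric.ball s (ρ / 2) ⊆ U := by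
      intro z hz
      apply hρ
      simp only [Metric.mem_ball] at hz ⊢
      have hsx' : dist s x < ρ / 2 := by rwa [dist_comm]
      calc dist z x ≤ dist z s + dist s x := dist_triangle z s x
        _ < ρ / 2 + ρ / 2 := add_lt_add hz hsx'
        _ = ρ := by ring
    have hzero := NashAux.slice_zero hφ s (ρ / 2) hsub hsS
    have hxball : x ∈ Metric.ball s (ρ / 2) := by
      simp only [Metric.mem_ball]
      exact hsx
    have : ∀ᶠ y in nhds x, φ y = 0 := by
      filter_upwards [Metric.isOpen_ball.mem_nhds hxball] with y hy
      exact hzero y hy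
    exact this
  exact fun y hy => (key hy).self_of_nhds

/-- If `g₁, …, g_l` are holomorphic on a connected open `V ⊆ ℂ` and algebraically
independent over the rational functions, and `φ` is holomorphic Nash-algebraic on a
connected open `Û ⊆ ℂ^{1+l}` containing the graph `z ↦ (z, g₁(z), …, g_l(z))` with
`φ(z, g₁(z), …, g_l(z)) = 0` on `V`, then `φ ≡ 0` on `Û`. -/
theorem nash_algebraic_vanishing_on_graph {l : ℕ}
    (V : Set ℂ) (hVopen : IsOpen V) (hVconn : IsConnected V)
    (g : Fin l → ℂ → ℂ) (hg : ∀ i, DifferentiableOn ℂ (g i) V)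
    (hindep : ¬ ∃ Q : MvPolynomial (Fin (l + 1)) ℂ, Q ≠ 0 ∧
      ∀ z ∈ V, eval (Fin.cons z fun i => g i z) Q = 0)
    (Uhat : Set (Fin (l + 1) → ℂ)) (hUopen : IsOpen Uhat) (hUconn : IsConnected Uhat)
    (hgraph : ∀ z ∈ V, (Fin.cons z fun i => g i z) ∈ Uhat)
    (φ : (Fin (l + 1) → ℂ) → ℂ) (hφ : IsNashAlgebraic Uhat φ)
    (hvan : ∀ z ∈ V, φ (Fin.cons z fun i => g i z) = 0) :
    ∀ x ∈ Uhat, φ x = 0 := by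
  obtain ⟨hφdiff, P, hP0, hPval⟩ := hφ
  by_contra hcon
  push_neg at hcon
  obtain ⟨x₀, hx₀U, hx₀⟩ := hcon
  -- φ is not eventually zero at any point of Uhat
  have hnev : ∀ x ∈ Uhat, ¬ (φ =ᶠ[nhds x] 0) := by
    intro x hx hev
    exact hx₀ (NashAux.ident hUopen hUconn.isPreconnected hφdiff hx hev x₀ hx₀U)
  -- any polynomial whose eval₂ vanishes on Uhat has zero constant coefficient
  have hc0 : ∀ q : Polynomial (MvPolynomial (Fin (l + 1)) ℂ),
      (∀ x ∈ Uhat, Polynomial.eval₂ (eval x) (φ x) q = 0) → q.coeff 0 = 0 := by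
    intro q hvq
    by_contra hne
    apply hindep
    refine ⟨q.coeff 0, hne, fun z hz => ?_⟩
    have hm := hgraph z hz
    have h1 := hvq _ hm
    rw [hvan z hz, Polynomial.eval₂_at_zero] at h1
    exact h1
  -- main induction on the degree
  have main : ∀ m : ℕ, ∀ q : Polynomial (MvPolynomial (Fin (l + 1)) ℂ),
      q.natDegree ≤ m → q ≠ 0 →
      (∀ x ∈ Uhat, Polynomial.eval₂ (eval x) (φ x) q = 0) → False := by
    intro m
    induction m with
    | zero =>
      intro q hdeg hq hvq
      apply hq
      rw [Polynomial.eq_C_of_natDegree_le_zero hdeg, hc0 q hvq, map_zero]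
    | succ m ih =>
      intro q hdeg hq hvq
      have h0 := hc0 q hvq
      have hsplit : q.divX * Polynomial.X = q := by
        have := Polynomial.divX_mul_X_add q
        rwa [h0, map_zero, add_zero] at this
      have hdq : q.divX ≠ 0 := by
        intro h; apply hq; rw [← hsplit, h, zero_mul]
      have hdeg' : q.divX.natDegree ≤ m := by
        have := Polynomial.natDegree_divX_eq_natDegree_tsub_one (p := q)
        omega
      apply ih q.divX hdeg' hdq
      -- eval₂ of divX vanishes on Uhat
      intro x hx
      by_contra hΨ
      set Ψ : (Fin (l + 1) → ℂ) → ℂ :=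
        fun y => eval (Sum.elim y fun _ => φ y) (NashAux.Bmap (l + 1) q.divX) with hΨ_def
      have hΨcontOn : ContinuousOn Ψ Uhat := by
        apply NashAux.continuousOn_eval (f := fun y => Sum.elim y fun _ => φ y)
        rintro (i | ⟨⟩)
        · exact (continuous_apply i).continuousOn
        · exact hφdiff.continuousOn
      have hΨx : Ψ x ≠ 0 := by
        rw [hΨ_def]
        simpa only [NashAux.Bmap_eval] using hΨ
      have hΨcont : ContinuousAt Ψ x := hΨcontOn.continuousAt (hUopen.mem_nhds hx)
      have hev : ∀ᶠ y in nhds x, Ψ y ≠ 0 := hΨcont.eventually_ne hΨx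
      apply hnev x hx
      filter_upwards [hev, hUopen.mem_nhds hx] with y h1 h2
      have h1' : Polynomial.eval₂ (eval y) (φ y) q.divX ≠ 0 := by
        simpa only [hΨ_def, NashAux.Bmap_eval] using h1
      have h3 := hvq y h2
      rw [← hsplit, Polynomial.eval₂_mul, Polynomial.eval₂_X] at h3
      simp only [Pi.zero_apply]
      rcases mul_eq_zero.mp h3 with h | h
      · exact absurd h h1'
      · exact h
  -- apply to q₀ = Amap P
  set q₀ := NashAux.Amap (l + 1) P with hq₀_def
  have hBq₀ : NashAux.Bmap (l + 1) q₀ = P := NashAux.Bmap_Amap _ _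
  apply main q₀.natDegree q₀ le_rfl
  · intro h
    apply hP0
    rw [← hBq₀, h, map_zero]
  · intro x hx
    rw [← NashAux.Bmap_eval, hBq₀]
    exact hPval x hx
end

section
/- Let D ⊆ ℂ be a connected open set containing 0 and F : D → ℂ^m a holomorphic map with F(0) = 0. Then for every z ∈ D, the vector F(z) lies in the complex linear span of the set of derivatives {F^{(δ)}(0) : δ ≥ 1} ⊆ ℂ^m. -/
/-- If `F : D → ℂ^m` is holomorphic on a connected open set `D ⊆ ℂ` containing `0` with
`F(0) = 0`, then for every `z ∈ D` the vector `F(z)` lies in the complex linear span of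
the derivatives `{F^{(δ)}(0) : δ ≥ 1}`. -/
theorem holomorphic_mem_span_iteratedDeriv {m : ℕ}
    (D : Set ℂ) (hDopen : IsOpen D) (hDconn : IsConnected D) (h0 : (0 : ℂ) ∈ D)
    (F : ℂ → (Fin m → ℂ)) (hF : DifferentiableOn ℂ F D) (hF0 : F 0 = 0) :
    ∀ z ∈ D, F z ∈ Submodule.span ℂ
      {v : Fin m → ℂ | ∃ δ : ℕ, 1 ≤ δ ∧ v = iteratedDeriv δ F 0} := by
  set S : Submodule ℂ (Fin m → ℂ) :=
    Submodule.span ℂ {v : Fin m → ℂ | ∃ δ : ℕ, 1 ≤ δ ∧ v = iteratedDeriv δ F 0} with hS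
  -- all iterated derivatives at 0 lie in S
  have hmem : ∀ n : ℕ, iteratedDeriv n F 0 ∈ S := by
    intro n
    rcases Nat.eq_zero_or_pos n with hn | hn
    · subst hn; simp [iteratedDeriv_zero, hF0]
    · exact Submodule.subset_span ⟨n, hn, rfl⟩
  have hFan : AnalyticOnNhd ℂ F D := hF.analyticOnNhd hDopen
  obtain ⟨p, hp⟩ : AnalyticAt ℂ F 0 := hFan 0 h0
  obtain ⟨r, hball⟩ := hp
  -- each power series coefficient (evaluated at 1) lies in S
  have hcoeff : ∀ n : ℕ, (p n fun _ => (1 : ℂ)) ∈ S := by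
    intro n
    have h1 : (n.factorial : ℂ) • (p n fun _ => (1 : ℂ)) = iteratedDeriv n F 0 := by
      have := hball.factorial_smul (y := (1 : ℂ)) n
      rw [iteratedDeriv_eq_iteratedFDeriv, ← this, ← Nat.cast_smul_eq_nsmul ℂ]
    have hne : (n.factorial : ℂ) ≠ 0 := Nat.cast_ne_zero.mpr n.factorial_ne_zero
    have : (p n fun _ => (1 : ℂ)) = (n.factorial : ℂ)⁻¹ • iteratedDeriv n F 0 := by
      rw [← h1, smul_smul, inv_mul_cancel₀ hne, one_smul]
    rw [this]
    exact S.smul_mem _ (hmem n)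
  intro z hz
  -- reduce to showing every dual functional vanishing on S kills F z
  rw [← Submodule.Quotient.mk_eq_zero S,
    ← Module.forall_dual_apply_eq_zero_iff ℂ (Submodule.Quotient.mk (F z))]
  intro φ
  set L : (Fin m → ℂ) →L[ℂ] ℂ :=
    LinearMap.toContinuousLinearMap (φ.comp S.mkQ) with hL
  have hLS : ∀ v ∈ S, L v = 0 := by
    intro v hv
    simp only [hL, LinearMap.coe_toContinuousLinearMap', LinearMap.comp_apply,
      Submodule.mkQ_apply, (Submodule.Quotient.mk_eq_zero S).mpr hv, map_zero]
  have hgan : AnalyticOnNhd ℂ (fun w => L (F w)) D :=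
    ((L.differentiable.comp_differentiableOn hF).analyticOnNhd hDopen)
  -- the composed function vanishes near 0
  have hev : (fun w => L (F w)) =ᶠ[nhds (0 : ℂ)] 0 := by
    filter_upwards [EMetric.ball_mem_nhds (0 : ℂ) hball.r_pos] with y hy
    have hy' : y ∈ Metric.eball (0 : ℂ) r := hy
    have hsum := (hball.hasSum hy').mapL L
    have hzero : ∀ n : ℕ, L (p n fun _ => y) = 0 := by
      intro n
      have : (p n fun _ => y) = y ^ n • (p n fun _ => (1 : ℂ)) := by
        have := (p n).map_smul_univ (fun _ => y) fun _ => (1 : ℂ)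
        simpa [smul_eq_mul] using this
      rw [this, map_smul, hLS _ (hcoeff n), smul_zero]
    have : HasSum (fun n => L (p n fun _ => y)) (L (F (0 + y))) := hsum
    rw [zero_add] at this
    simp only [hzero] at this
    simpa using this.unique hasSum_zero
  have := hgan.eqOn_zero_of_preconnected_of_eventuallyEq_zero hDconn.isPreconnected h0 hev
  have hz0 : L (F z) = 0 := this hz
  simpa [hL] using hz0
end
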